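/- arXiv:0705.3305 — 2 statements merged into one kernel-verified Lean document; each statement's English description precedes it below -/
import Mathlib

section
/- Let p := P(T is odd), and if d = 1 assume p < 1. Then for every n ≥ 1, E(|W^r_n|^2) = n·d·p/(d−p) + (p^2·(2d−1)/(2·(d−p)^2))·[ ((2p−1)/(2d−1))^n − 1 ]. -/
open MeasureTheory ProbabilityTheory Filter

noncomputable section

/-- The `2d` unit vectors `±e_i` of `ℤ^d ⊆ ℝ^d`. -/
def unitVecs (d : ℕ) : Set (EuclideanSpace ℝ (Fin d)) :=
  {v | ∃ i : Fin d, v = EuclideanSpace.single i 1 ∨ v = EuclideanSpace.single i (-1)}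

/-- The random times `τ_n = T_1 + ⋯ + T_n` (with `τ_0 = 0`). -/
def tauT {Ω : Type} (T : ℕ → Ω → ℕ) (n : ℕ) (ω : Ω) : ℕ :=
  ∑ k ∈ Finset.Icc 1 n, T k ω

/-- The inverse time change `τ⁻¹_n = inf {m ≥ 1 : τ_m ≥ n}`. -/
def tauInv {Ω : Type} (T : ℕ → Ω → ℕ) (n : ℕ) (ω : Ω) : ℕ :=
  sInf {m : ℕ | 1 ≤ m ∧ n ≤ tauT T m ω}

/-- The σ-field `F_k = σ(D_1, T_1, …, D_k, T_k)`. -/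
def walkSigma {Ω β : Type} [MeasurableSpace Ω] [MeasurableSpace β]
    (D : ℕ → Ω → β) (T : ℕ → Ω → ℕ) (k : ℕ) : MeasurableSpace Ω :=
  ⨆ m ∈ Finset.Icc 1 k,
    (MeasurableSpace.comap (D m) inferInstance ⊔ MeasurableSpace.comap (T m) inferInstance)

/-- The filtration `(F_{n+1})_{n ≥ 0}`, i.e. `(F_n)_{n ≥ 1}` reindexed from `0`. -/
def walkFiltration {Ω β : Type} [m0 : MeasurableSpace Ω] [MeasurableSpace β]
    (D : ℕ → Ω → β) (T : ℕ → Ω → ℕ)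
    (measD : ∀ m, Measurable (D m)) (measT : ∀ m, Measurable (T m)) :
    Filtration ℕ m0 where
  seq n := walkSigma D T (n + 1)
  mono' := by
    intro i j hij
    refine iSup_le fun m => iSup_le fun hm => ?_
    refine le_iSup₂_of_le m ?_ le_rfl
    simp only [Finset.mem_Icc] at hm ⊢
    omega
  le' := by
    intro n
    refine iSup_le fun m => iSup_le fun _ => sup_le ?_ ?_
    · exact (measD m).comap_le
    · exact (measT m).comap_le

section helpers
variable {Ω β : Type}

theorem tauT_mono (T : ℕ → Ω → ℕ) (ω : Ω) : Monotone fun m => tauT T m ω := by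
  intro a b hab
  exact Finset.sum_le_sum_of_subset (Finset.Icc_subset_Icc_right hab)

theorem self_le_tauT (T : ℕ → Ω → ℕ) (T_pos : ∀ m ω, 1 ≤ T m ω) (n : ℕ) (ω : Ω) :
    n ≤ tauT T n ω := by
  calc n = ∑ _k ∈ Finset.Icc 1 n, 1 := by simp
  _ ≤ tauT T n ω := Finset.sum_le_sum fun k _ => T_pos k ω

theorem tauInv_le_iff (T : ℕ → Ω → ℕ) (T_pos : ∀ m ω, 1 ≤ T m ω) (n k : ℕ) (hk : 1 ≤ k) :
    {ω | tauInv T n ω ≤ k} = {ω | n ≤ tauT T k ω} := by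
  ext ω
  simp only [Set.mem_setOf_eq, tauInv]
  constructor
  · intro hle
    rcases Nat.eq_zero_or_pos n with hn | hn
    · omega
    · have hne : {m : ℕ | 1 ≤ m ∧ n ≤ tauT T m ω}.Nonempty :=
        ⟨n, hn, self_le_tauT T T_pos n ω⟩
      obtain ⟨h1, h2⟩ := Nat.sInf_mem hne
      exact le_trans h2 (tauT_mono T ω hle)
  · intro hle
    exact Nat.sInf_le ⟨hk, hle⟩

theorem measurable_tauT_walkSigma [MeasurableSpace Ω] [MeasurableSpace β]
    (D : ℕ → Ω → β) (T : ℕ → Ω → ℕ) (k : ℕ) :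
    Measurable[walkSigma D T k] (tauT T k) := by
  apply Finset.measurable_sum
  intro m hm
  refine measurable_iff_comap_le.2 (le_trans ?_ (le_iSup₂_of_le m hm le_rfl))
  exact le_sup_right

theorem measurableSet_tauInv_le [MeasurableSpace Ω] [MeasurableSpace β]
    (D : ℕ → Ω → β) (T : ℕ → Ω → ℕ) (T_pos : ∀ m ω, 1 ≤ T m ω) (n k : ℕ) (hk : 1 ≤ k) :
    MeasurableSet[walkSigma D T k] {ω | tauInv T n ω ≤ k} := by
  rw [tauInv_le_iff T T_pos n k hk]
  exact measurable_tauT_walkSigma D T k measurableSet_Ici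

end helpers

/-- The σ-field `{A : A ∩ {σ ≤ k} ∈ F_k for all k = 1, …, n}` associated with a
random time `σ` bounded by `n`. -/
def stoppedSigma {Ω : Type} (F : ℕ → MeasurableSpace Ω) (σf : Ω → ℕ) (n : ℕ)
    (h : ∀ k, 1 ≤ k → k ≤ n → MeasurableSet[F k] {ω | σf ω ≤ k}) : MeasurableSpace Ω where
  MeasurableSet' A := ∀ k, 1 ≤ k → k ≤ n → MeasurableSet[F k] (A ∩ {ω | σf ω ≤ k})
  measurableSet_empty := fun k _ _ => by
    simp
  measurableSet_compl := fun A hA k hk1 hk2 => by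
    have hs : MeasurableSet[F k] {ω | σf ω ≤ k} := h k hk1 hk2
    have heq : Aᶜ ∩ {ω | σf ω ≤ k} = {ω | σf ω ≤ k} \ (A ∩ {ω | σf ω ≤ k}) := by
      ext ω; by_cases hω : σf ω ≤ k <;> simp [hω]
    rw [heq]
    exact hs.diff (hA k hk1 hk2)
  measurableSet_iUnion := fun s hs k hk1 hk2 => by
    rw [Set.iUnion_inter]
    exact MeasurableSet.iUnion fun i => hs i k hk1 hk2

/-- The σ-field `F_{τ⁻¹_n} = {A : A ∩ {τ⁻¹_n ≤ k} ∈ F_k for all k = 1, …, n}`. -/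
def Fstop {Ω β : Type} [MeasurableSpace Ω] [MeasurableSpace β]
    (D : ℕ → Ω → β) (T : ℕ → Ω → ℕ) (T_pos : ∀ m ω, 1 ≤ T m ω) (n : ℕ) :
    MeasurableSpace Ω :=
  stoppedSigma (walkSigma D T) (tauInv T n) n
    (fun k hk1 _ => measurableSet_tauInv_le D T T_pos n k hk1)
/-- Setup for the reinforced time-changed walk: i.i.d. times `(T_m)_{m ≥ 1}` with values in
`{1, 2, …}`, step lengths `L_m = 1(T_m odd)`, and directions `(D_m)_{m ≥ 1}` on the `2d` unit
vectors with `D_1` uniform and, conditionally on `(D_m, L_m)`, `D_{m+1}` uniform on the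
`2d - 1` unit vectors different from `D_m` if `L_m = 0`, resp. different from `-D_m` if
`L_m = 1`. The joint law of directions and times is specified through the probabilities of
the cylinder events. -/
structure ReinforcedWalk (d : ℕ) (Ω : Type) [MeasurableSpace Ω] (μ : Measure Ω) where
  T : ℕ → Ω → ℕ
  D : ℕ → Ω → EuclideanSpace ℝ (Fin d)
  measT : ∀ m, Measurable (T m)
  measD : ∀ m, Measurable (D m)
  T_pos : ∀ m ω, 1 ≤ T m ω
  T_iid : iIndepFun (fun m : ℕ => T (m + 1)) μ
  T_ident : ∀ m : ℕ, IdentDistrib (T (m + 1)) (T 1) μ μ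
  D_mem : ∀ m ω, D m ω ∈ unitVecs d
  DT_path : ∀ n : ℕ, 1 ≤ n → ∀ (v : ℕ → EuclideanSpace ℝ (Fin d)) (t : ℕ → ℕ),
    (∀ m, v m ∈ unitVecs d) →
    (∀ m, 1 ≤ m → m + 1 ≤ n →
      (if Odd (t m) then v (m + 1) ≠ -v m else v (m + 1) ≠ v m)) →
    μ {ω | ∀ m, 1 ≤ m → m ≤ n → D m ω = v m ∧ T m ω = t m}
      = ENNReal.ofReal ((2 * (d : ℝ))⁻¹ * ((2 * (d : ℝ) - 1)⁻¹) ^ (n - 1))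
        * ∏ m ∈ Finset.Icc 1 n, μ {ω | T 1 ω = t m}

namespace ReinforcedWalk

variable {d : ℕ} {Ω : Type} [MeasurableSpace Ω] {μ : Measure Ω}

/-- The step lengths `L_m = 1(T_m odd)`. -/
def L (Wk : ReinforcedWalk d Ω μ) (m : ℕ) (ω : Ω) : ℕ :=
  if Odd (Wk.T m ω) then 1 else 0

/-- The reinforced time-changed walk `W^r_n = ∑_{m=1}^n D_m L_m`. -/
def W (Wk : ReinforcedWalk d Ω μ) (n : ℕ) (ω : Ω) : EuclideanSpace ℝ (Fin d) :=
  ∑ m ∈ Finset.Icc 1 n, (Wk.L m ω : ℝ) • Wk.D m ω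

/-- The probability `p = P(T is odd)`. -/
def p (Wk : ReinforcedWalk d Ω μ) : ℝ := (μ {ω | Odd (Wk.T 1 ω)}).toReal

/-- The expectation `E(T)` of the generic time. -/
def ET (Wk : ReinforcedWalk d Ω μ) : ℝ := ∫ ω, (Wk.T 1 ω : ℝ) ∂μ

/-- The diffusion constant `C^r = d p/(d - p)`. -/
def Cr (Wk : ReinforcedWalk d Ω μ) : ℝ := (d : ℝ) * Wk.p / ((d : ℝ) - Wk.p)

/-- The martingale `M^r_n = W^r_n + (p/(2(d-p))) D_n (2 L_n - 1)`. -/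
def M (Wk : ReinforcedWalk d Ω μ) (n : ℕ) (ω : Ω) : EuclideanSpace ℝ (Fin d) :=
  Wk.W n ω + (Wk.p / (2 * ((d : ℝ) - Wk.p)) * (2 * (Wk.L n ω : ℝ) - 1)) • Wk.D n ω

/-- The senile reinforced random walk `S^r_n = W^r_{τ⁻¹_n} - D_{τ⁻¹_n} 1(τ_{τ⁻¹_n} - n odd)`. -/
def S (Wk : ReinforcedWalk d Ω μ) (n : ℕ) (ω : Ω) : EuclideanSpace ℝ (Fin d) :=
  Wk.W (tauInv Wk.T n ω) ω
    - (if Odd (tauT Wk.T (tauInv Wk.T n ω) ω - n) then (1 : ℝ) else 0) • Wk.D (tauInv Wk.T n ω) ω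

end ReinforcedWalk

set_option linter.unusedSectionVars false

namespace RWAux

open scoped ENNReal

variable {d : ℕ}

/-! ### Unit vector codes -/

def vec (d : ℕ) (e : Fin d × Bool) : EuclideanSpace ℝ (Fin d) :=
  EuclideanSpace.single e.1 (if e.2 then (1 : ℝ) else -1)

lemma vec_apply (e : Fin d × Bool) (j : Fin d) :
    vec d e j = if j = e.1 then (if e.2 then (1 : ℝ) else -1) else 0 :=
  EuclideanSpace.single_apply _ _ _

lemma vec_injective : Function.Injective (vec d) := by
  rintro ⟨i, b⟩ ⟨j, c⟩ h
  have h1 : vec d (i, b) i = vec d (j, c) i := by rw [h]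
  rw [vec_apply, vec_apply] at h1
  simp only [if_pos rfl] at h1
  by_cases hij : i = j
  · subst hij
    simp only [if_pos rfl] at h1
    cases b <;> cases c <;> first | rfl | (norm_num at h1)
  · rw [if_neg hij] at h1
    cases b <;> norm_num at h1

lemma vec_mem (e : Fin d × Bool) : vec d e ∈ unitVecs d := by
  rcases e with ⟨i, b⟩
  cases b
  · exact ⟨i, Or.inr (by simp [vec])⟩
  · exact ⟨i, Or.inl (by simp [vec])⟩

lemma exists_code {v : EuclideanSpace ℝ (Fin d)} (hv : v ∈ unitVecs d) : ∃ e, vec d e = v := by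
  rcases hv with ⟨i, h | h⟩
  · exact ⟨(i, true), by simp [vec, h]⟩
  · exact ⟨(i, false), by simp [vec, h]⟩

lemma norm_vec (e : Fin d × Bool) : ‖vec d e‖ = 1 := by
  rcases e with ⟨i, b⟩
  cases b <;> simp [vec, EuclideanSpace.norm_single]

def inn (d : ℕ) (u x : Fin d × Bool) : ℝ := inner ℝ (vec d u) (vec d x)

lemma inn_self (u : Fin d × Bool) : inn d u u = 1 := by
  rw [inn, real_inner_self_eq_norm_mul_norm, norm_vec, mul_one]

lemma sum_vec (d : ℕ) : ∑ e : Fin d × Bool, vec d e = 0 := by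
  rw [Fintype.sum_prod_type]
  refine Finset.sum_eq_zero fun i _ => ?_
  rw [Fintype.univ_bool, Finset.sum_pair (by decide)]
  ext j
  simp only [PiLp.add_apply, PiLp.zero_apply, vec_apply]
  by_cases hji : j = i <;> simp [hji]

lemma sum_inn (u : Fin d × Bool) : ∑ x : Fin d × Bool, inn d u x = 0 := by
  unfold inn
  rw [← inner_sum, sum_vec, inner_zero_right]

lemma sum_ite_inn (u c : Fin d × Bool) :
    ∑ x : Fin d × Bool, (if x = c then (0 : ℝ) else 1) * inn d u x = - inn d u c := by
  have h : ∀ x : Fin d × Bool, (if x = c then (0 : ℝ) else 1) * inn d u x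
      = inn d u x - (if x = c then inn d u x else 0) := by
    intro x; by_cases hx : x = c <;> simp [hx]
  rw [Finset.sum_congr rfl fun x _ => h x, Finset.sum_sub_distrib, sum_inn,
    Finset.sum_ite_eq' Finset.univ c fun x => inn d u x]
  simp

def negE (e : Fin d × Bool) : Fin d × Bool := (e.1, !e.2)

lemma vec_negE (e : Fin d × Bool) : vec d (negE e) = - vec d e := by
  ext j
  rcases e with ⟨i, b⟩
  simp only [PiLp.neg_apply, vec_apply, negE]
  by_cases hji : j = i <;> cases b <;> simp [hji]

def forbE (e : Fin d × Bool) (ε : Bool) : Fin d × Bool := if ε then negE e else e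

lemma inn_forbE (u x' : Fin d × Bool) (ε : Bool) :
    inn d u (forbE x' ε) = if ε then - inn d u x' else inn d u x' := by
  cases ε <;> simp [forbE, inn, vec_negE, inner_neg_right]

lemma sumBool {M : Type*} [AddCommMonoid M] (f : Bool → M) :
    ∑ b : Bool, f b = f true + f false := by
  rw [Fintype.univ_bool, Finset.sum_pair (by decide)]

/-! ### Cylinder events -/

section Walk

variable {Ω : Type} [MeasurableSpace Ω] {μ : Measure Ω} [IsProbabilityMeasure μ]

def pb (t : ℕ) : Bool := decide (Odd t)

def cylN (Wk : ReinforcedWalk d Ω μ) (n : ℕ) (v : ℕ → Fin d × Bool) (t : ℕ → ℕ) : Set Ω :=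
  {ω | ∀ m, 1 ≤ m → m ≤ n → Wk.D m ω = vec d (v m) ∧ Wk.T m ω = t m}

def extT (Wk : ReinforcedWalk d Ω μ) (j : ℕ) (x : Fin d × Bool) (t' : ℕ) : Set Ω :=
  {ω | Wk.D j ω = vec d x ∧ Wk.T j ω = t'}

def extP (Wk : ReinforcedWalk d Ω μ) (j : ℕ) (x : Fin d × Bool) (ε : Bool) : Set Ω :=
  {ω | Wk.D j ω = vec d x ∧ pb (Wk.T j ω) = ε}

def validC (n : ℕ) (v : ℕ → Fin d × Bool) (t : ℕ → ℕ) : Prop :=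
  ∀ m, 1 ≤ m → m + 1 ≤ n → v (m + 1) ≠ forbE (v m) (pb (t m))

variable (Wk : ReinforcedWalk d Ω μ)

lemma measD_eq (m : ℕ) (c : EuclideanSpace ℝ (Fin d)) : MeasurableSet {ω | Wk.D m ω = c} :=
  Wk.measD m (measurableSet_singleton c)

lemma measT_mem (m : ℕ) (s : Set ℕ) : MeasurableSet {ω | Wk.T m ω ∈ s} :=
  Wk.measT m trivial

lemma meas_cylN (n : ℕ) (v : ℕ → Fin d × Bool) (t : ℕ → ℕ) : MeasurableSet (cylN Wk n v t) := by
  have h : cylN Wk n v t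
      = ⋂ m ∈ Finset.Icc 1 n, ({ω | Wk.D m ω = vec d (v m)} ∩ {ω | Wk.T m ω = t m}) := by
    ext ω
    simp only [cylN, Set.mem_setOf_eq, Set.mem_iInter, Set.mem_inter_iff, Finset.mem_Icc]
    exact ⟨fun h m hm => h m hm.1 hm.2, fun h m h1 h2 => h m ⟨h1, h2⟩⟩
  rw [h]
  exact Finset.measurableSet_biInter _ fun m _ =>
    (measD_eq Wk m _).inter (measT_mem Wk m {t m})

lemma meas_extT (j : ℕ) (x : Fin d × Bool) (t' : ℕ) : MeasurableSet (extT Wk j x t') :=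
  (measD_eq Wk j _).inter (measT_mem Wk j {t'})

lemma meas_extP (j : ℕ) (x : Fin d × Bool) (ε : Bool) : MeasurableSet (extP Wk j x ε) :=
  (measD_eq Wk j _).inter (measT_mem Wk j {t | pb t = ε})

lemma meas_cylN_valid {n : ℕ} (hn : 1 ≤ n) {v : ℕ → Fin d × Bool} {t : ℕ → ℕ}
    (hv : validC n v t) :
    μ (cylN Wk n v t)
      = ENNReal.ofReal ((2 * (d : ℝ))⁻¹ * ((2 * (d : ℝ) - 1)⁻¹) ^ (n - 1))
        * ∏ m ∈ Finset.Icc 1 n, μ {ω | Wk.T 1 ω = t m} := by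
  refine Wk.DT_path n hn (fun m => vec d (v m)) t (fun m => vec_mem _) ?_
  intro m h1 h2
  have key : vec d (v (m + 1)) ≠ vec d (forbE (v m) (pb (t m))) :=
    fun hc => hv m h1 h2 (vec_injective hc)
  by_cases ho : Odd (t m)
  · rw [if_pos ho]
    have hpb : pb (t m) = true := by simp [pb, ho]
    rw [← vec_negE]
    simpa [forbE, hpb, negE] using key
  · rw [if_neg ho]
    have hpb : pb (t m) = false := by simp [pb, ho]
    simpa [forbE, hpb] using key

lemma step_valid (hd : 0 < d) {n : ℕ} (hn : 1 ≤ n) {v : ℕ → Fin d × Bool} {t : ℕ → ℕ}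
    (hv : validC n v t) {x : Fin d × Bool} (hx : x ≠ forbE (v n) (pb (t n))) (t' : ℕ) :
    μ (cylN Wk n v t ∩ extT Wk (n + 1) x t')
      = ENNReal.ofReal ((2 * (d : ℝ) - 1)⁻¹)
        * (μ {ω | Wk.T 1 ω = t'} * μ (cylN Wk n v t)) := by
  have hset : cylN Wk n v t ∩ extT Wk (n + 1) x t'
      = cylN Wk (n + 1) (Function.update v (n + 1) x) (Function.update t (n + 1) t') := by
    ext ω
    constructor
    · rintro ⟨h1, h2, h3⟩ m hm1 hm2
      by_cases hmn : m ≤ n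
      · rw [Function.update_of_ne (by omega), Function.update_of_ne (by omega)]
        exact h1 m hm1 hmn
      · have hm : m = n + 1 := by omega
        subst hm
        rw [Function.update_self, Function.update_self]
        exact ⟨h2, h3⟩
    · intro h
      refine ⟨fun m hm1 hm2 => ?_, ?_, ?_⟩
      · have hh := h m hm1 (by omega)
        rwa [Function.update_of_ne (by omega), Function.update_of_ne (by omega)] at hh
      · have hh := (h (n + 1) (by omega) le_rfl).1
        rwa [Function.update_self] at hh
      · have hh := (h (n + 1) (by omega) le_rfl).2
        rwa [Function.update_self] at hh
  have hv2 : validC (n + 1) (Function.update v (n + 1) x) (Function.update t (n + 1) t') := by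
    intro m hm1 hm2
    by_cases hmn : m + 1 ≤ n
    · rw [Function.update_of_ne (by omega), Function.update_of_ne (by omega),
        Function.update_of_ne (by omega)]
      exact hv m hm1 hmn
    · have hm : m = n := by omega
      subst hm
      rw [Function.update_self, Function.update_of_ne (by omega),
        Function.update_of_ne (by omega)]
      exact hx
  rw [hset, meas_cylN_valid Wk (by omega) hv2, meas_cylN_valid Wk hn hv]
  have h1 : ∏ m ∈ Finset.Icc 1 (n + 1), μ {ω | Wk.T 1 ω = Function.update t (n + 1) t' m}
      = (∏ m ∈ Finset.Icc 1 n, μ {ω | Wk.T 1 ω = t m}) * μ {ω | Wk.T 1 ω = t'} := by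
    rw [Finset.prod_Icc_succ_top (by omega)]
    congr 1
    · refine Finset.prod_congr rfl fun m hm => ?_
      simp only [Finset.mem_Icc] at hm
      rw [Function.update_of_ne (by omega)]
    · rw [Function.update_self]
  rw [h1]
  have hd1 : (1 : ℝ) ≤ (d : ℝ) := by exact_mod_cast hd
  have h2 : ((2 * (d : ℝ))⁻¹ * ((2 * (d : ℝ) - 1)⁻¹) ^ (n + 1 - 1))
      = ((2 * (d : ℝ) - 1)⁻¹) * ((2 * (d : ℝ))⁻¹ * ((2 * (d : ℝ) - 1)⁻¹) ^ (n - 1)) := by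
    have hn' : n + 1 - 1 = (n - 1) + 1 := by omega
    rw [hn', pow_succ]; ring
  have hcnn : (0 : ℝ) ≤ (2 * (d : ℝ) - 1)⁻¹ := by
    apply inv_nonneg.mpr; linarith
  rw [h2, ENNReal.ofReal_mul hcnn]
  ring

lemma tsum_T_total : ∑' t' : ℕ, μ {ω | Wk.T 1 ω = t'} = 1 := by
  have h : (Set.univ : Set Ω) = ⋃ t' : ℕ, {ω | Wk.T 1 ω = t'} := by
    ext ω; simp
  rw [← measure_univ (μ := μ), h, measure_iUnion]
  · intro a b hab
    simp only [Function.onFun]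
    apply Set.disjoint_left.mpr
    rintro ω h1 h2
    exact hab (h1.symm.trans h2)
  · exact fun t' => measT_mem Wk 1 {t'}

lemma card_mul_c (hd : 0 < d) :
    ((Fintype.card (Fin d × Bool) - 1 : ℕ) : ℝ≥0∞) * ENNReal.ofReal ((2 * (d : ℝ) - 1)⁻¹) = 1 := by
  have hd1 : (1 : ℝ) ≤ (d : ℝ) := by exact_mod_cast hd
  have hcard : Fintype.card (Fin d × Bool) = d * 2 := by simp
  rw [hcard, ← ENNReal.ofReal_natCast, ← ENNReal.ofReal_mul (by positivity)]
  have hcast : ((d * 2 - 1 : ℕ) : ℝ) = 2 * (d : ℝ) - 1 := by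
    have : 1 ≤ d * 2 := by omega
    push_cast [Nat.cast_sub this]
    ring
  rw [hcast, mul_inv_cancel₀ (by linarith)]
  exact ENNReal.ofReal_one

lemma badExt_null (hd : 0 < d) {n : ℕ} (hn : 1 ≤ n) {v : ℕ → Fin d × Bool} {t : ℕ → ℕ}
    (hv : validC n v t) (t' : ℕ) :
    μ (cylN Wk n v t ∩ extT Wk (n + 1) (forbE (v n) (pb (t n))) t') = 0 := by
  set C := cylN Wk n v t with hC
  set bad := forbE (v n) (pb (t n)) with hbad
  have hcover : C = ⋃ t'' : ℕ, C ∩ {ω | Wk.T (n + 1) ω = t''} := by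
    ext ω
    simp only [Set.mem_iUnion, Set.mem_inter_iff, Set.mem_setOf_eq]
    constructor
    · intro hω
      exact ⟨Wk.T (n + 1) ω, hω, rfl⟩
    · rintro ⟨q, h, _⟩; exact h
  have hdisj : Pairwise (Function.onFun Disjoint
      fun t'' : ℕ => C ∩ {ω | Wk.T (n + 1) ω = t''}) := by
    intro t1 t2 hne
    simp only [Function.onFun]
    apply Set.disjoint_left.mpr
    rintro ω ⟨_, ht1⟩ ⟨_, ht2⟩
    exact hne (ht1.symm.trans ht2)
  have hsum : μ C = ∑' t'' : ℕ, μ (C ∩ {ω | Wk.T (n + 1) ω = t''}) := by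
    conv_lhs => rw [hcover]
    exact measure_iUnion hdisj fun t'' =>
      (meas_cylN Wk n v t).inter (measT_mem Wk (n + 1) {t''})
  have hinner : ∀ t'' : ℕ, μ (C ∩ {ω | Wk.T (n + 1) ω = t''})
      = μ {ω | Wk.T 1 ω = t''} * μ C + μ (C ∩ extT Wk (n + 1) bad t'') := by
    intro t''
    have hsplit : C ∩ {ω | Wk.T (n + 1) ω = t''}
        = ⋃ x ∈ (Finset.univ : Finset (Fin d × Bool)), (C ∩ extT Wk (n + 1) x t'') := by
      ext ω
      simp only [Set.mem_iUnion, Finset.mem_univ, Set.mem_inter_iff, Set.mem_setOf_eq,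
        exists_prop, true_and, extT]
      constructor
      · rintro ⟨hC', hT⟩
        obtain ⟨e, he⟩ := exists_code (Wk.D_mem (n + 1) ω)
        exact ⟨e, hC', he.symm, hT⟩
      · rintro ⟨x, hC', _, hT⟩
        exact ⟨hC', hT⟩
    rw [hsplit, measure_biUnion_finset]
    rotate_left
    · rintro x1 - x2 - hne
      simp only [Function.onFun]
      apply Set.disjoint_left.mpr
      rintro ω ⟨_, hD1, _⟩ ⟨_, hD2, _⟩
      exact hne (vec_injective (hD1.symm.trans hD2))
    · exact fun x _ => (meas_cylN Wk n v t).inter (meas_extT Wk (n + 1) x t'')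
    rw [← Finset.sum_erase_add _ _ (Finset.mem_univ bad)]
    congr 1
    have hval : ∀ x ∈ Finset.univ.erase bad,
        μ (C ∩ extT Wk (n + 1) x t'')
          = ENNReal.ofReal ((2 * (d : ℝ) - 1)⁻¹) * (μ {ω | Wk.T 1 ω = t''} * μ C) := by
      intro x hx
      exact step_valid Wk hd hn hv (Finset.ne_of_mem_erase hx) t''
    rw [Finset.sum_congr rfl hval, Finset.sum_const, Finset.card_erase_of_mem (Finset.mem_univ _),
      Finset.card_univ, nsmul_eq_mul, ← mul_assoc, card_mul_c hd, one_mul]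
  have heq : μ C = μ C + ∑' t'' : ℕ, μ (C ∩ extT Wk (n + 1) bad t'') := by
    have h1 : μ C = ∑' t'' : ℕ,
        (μ {ω | Wk.T 1 ω = t''} * μ C + μ (C ∩ extT Wk (n + 1) bad t'')) :=
      hsum.trans (tsum_congr hinner)
    rwa [ENNReal.tsum_add, ENNReal.tsum_mul_right, tsum_T_total, one_mul] at h1
  have hzero : ∑' t'' : ℕ, μ (C ∩ extT Wk (n + 1) bad t'') = 0 := by
    have h0 : μ C + 0 = μ C + ∑' t'' : ℕ, μ (C ∩ extT Wk (n + 1) bad t'') := by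
      rw [add_zero]; exact heq
    exact ((ENNReal.add_right_inj (measure_ne_top μ C)).mp h0).symm
  exact ENNReal.tsum_eq_zero.mp hzero t'

lemma invalid_null (hd : 0 < d) {n : ℕ} {v : ℕ → Fin d × Bool} {t : ℕ → ℕ}
    (hnv : ¬ validC n v t) : μ (cylN Wk n v t) = 0 := by
  classical
  have hex : ∃ m, 1 ≤ m ∧ m + 1 ≤ n ∧ v (m + 1) = forbE (v m) (pb (t m)) := by
    by_contra h
    push_neg at h
    exact hnv fun m h1 h2 => h m h1 h2
  have hspec := Nat.find_spec hex
  have h1 := hspec.1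
  have h21 := hspec.2.1
  have hvpre : validC (Nat.find hex) v t := by
    intro j hj1 hj2 hcon
    exact Nat.find_min hex (show j < Nat.find hex by omega) ⟨hj1, by omega, hcon⟩
  have hsub : cylN Wk n v t ⊆ cylN Wk (Nat.find hex) v t
      ∩ extT Wk (Nat.find hex + 1) (v (Nat.find hex + 1)) (t (Nat.find hex + 1)) := by
    intro ω hω
    exact ⟨fun m hm1 hm2 => hω m hm1 (by omega),
      (hω (Nat.find hex + 1) (by omega) (by omega)).1,
      (hω (Nat.find hex + 1) (by omega) (by omega)).2⟩
  have h0 := badExt_null Wk hd h1 hvpre (t (Nat.find hex + 1))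
  rw [← hspec.2.2] at h0
  exact measure_mono_null hsub h0

lemma step_all (hd : 0 < d) {n : ℕ} (hn : 1 ≤ n) (v : ℕ → Fin d × Bool) (t : ℕ → ℕ)
    (x : Fin d × Bool) (t' : ℕ) :
    μ (cylN Wk n v t ∩ extT Wk (n + 1) x t')
      = (if x = forbE (v n) (pb (t n)) then 0 else 1) * ENNReal.ofReal ((2 * (d : ℝ) - 1)⁻¹)
        * (μ {ω | Wk.T 1 ω = t'} * μ (cylN Wk n v t)) := by
  by_cases hval : validC n v t
  · by_cases hx : x = forbE (v n) (pb (t n))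
    · subst hx
      rw [if_pos rfl, badExt_null Wk hd hn hval t', zero_mul, zero_mul]
    · rw [if_neg hx, one_mul, step_valid Wk hd hn hval hx t']
  · have h0 : μ (cylN Wk n v t) = 0 := invalid_null Wk hd hval
    have h0' : μ (cylN Wk n v t ∩ extT Wk (n + 1) x t') = 0 :=
      measure_mono_null Set.inter_subset_left h0
    rw [h0, h0', mul_zero, mul_zero]

def wB (Wk : ReinforcedWalk d Ω μ) (ε : Bool) : ℝ≥0∞ := μ {ω | pb (Wk.T 1 ω) = ε}

lemma tsum_parity (ε : Bool) :
    ∑' t' : ℕ, (if pb t' = ε then μ {ω | Wk.T 1 ω = t'} else 0) = wB Wk ε := by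
  have hset : {ω | pb (Wk.T 1 ω) = ε}
      = ⋃ t' : ℕ, (if pb t' = ε then {ω | Wk.T 1 ω = t'} else ∅) := by
    ext ω
    simp only [Set.mem_iUnion, Set.mem_setOf_eq]
    constructor
    · intro h
      refine ⟨Wk.T 1 ω, ?_⟩
      rw [if_pos h]
      exact rfl
    · rintro ⟨t', ht⟩
      by_cases hp : pb t' = ε
      · rw [if_pos hp] at ht
        have : Wk.T 1 ω = t' := ht
        rw [this]; exact hp
      · rw [if_neg hp] at ht
        exact absurd ht (Set.notMem_empty ω)
  rw [wB, hset, measure_iUnion]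
  · refine tsum_congr fun t' => ?_
    by_cases hp : pb t' = ε <;> simp [hp]
  · intro a b hab
    simp only [Function.onFun]
    split_ifs <;> simp_all
    apply Set.disjoint_left.mpr
    rintro ω h1 h2
    exact hab (h1.symm.trans h2)
  · intro t'
    split_ifs
    · exact measT_mem Wk 1 {t'}
    · exact MeasurableSet.empty

lemma step_parity (hd : 0 < d) {n : ℕ} (hn : 1 ≤ n) (v : ℕ → Fin d × Bool) (t : ℕ → ℕ)
    (x : Fin d × Bool) (ε : Bool) :
    μ (cylN Wk n v t ∩ extP Wk (n + 1) x ε)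
      = (if x = forbE (v n) (pb (t n)) then 0 else 1) * ENNReal.ofReal ((2 * (d : ℝ) - 1)⁻¹)
        * (wB Wk ε * μ (cylN Wk n v t)) := by
  have hdec : cylN Wk n v t ∩ extP Wk (n + 1) x ε
      = ⋃ t' : ℕ, (if pb t' = ε then cylN Wk n v t ∩ extT Wk (n + 1) x t' else ∅) := by
    ext ω
    simp only [Set.mem_iUnion]
    constructor
    · rintro ⟨hc, hD, hpb⟩
      refine ⟨Wk.T (n + 1) ω, ?_⟩
      rw [if_pos hpb]
      exact ⟨hc, hD, rfl⟩
    · rintro ⟨t', ht⟩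
      by_cases hp : pb t' = ε
      · rw [if_pos hp] at ht
        obtain ⟨hc, hD, hT⟩ := ht
        have : pb (Wk.T (n + 1) ω) = ε := by rw [hT]; exact hp
        exact ⟨hc, hD, this⟩
      · rw [if_neg hp] at ht
        exact absurd ht (Set.notMem_empty ω)
  rw [hdec, measure_iUnion]
  · have hterm : ∀ t' : ℕ, μ (if pb t' = ε then cylN Wk n v t ∩ extT Wk (n + 1) x t' else ∅)
        = ((if x = forbE (v n) (pb (t n)) then 0 else 1) * ENNReal.ofReal ((2 * (d : ℝ) - 1)⁻¹)
            * μ (cylN Wk n v t)) * (if pb t' = ε then μ {ω | Wk.T 1 ω = t'} else 0) := by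
      intro t'
      by_cases hp : pb t' = ε
      · rw [if_pos hp, if_pos hp, step_all Wk hd hn v t x t']
        ring
      · rw [if_neg hp, if_neg hp, measure_empty, mul_zero]
    rw [tsum_congr hterm, ENNReal.tsum_mul_left, tsum_parity Wk ε]
    ring
  · intro a b hab
    simp only [Function.onFun]
    split_ifs <;> simp_all
    apply Set.disjoint_left.mpr
    rintro ω ⟨_, _, h1⟩ ⟨_, _, h2⟩
    exact hab (h1.symm.trans h2)
  · intro t'
    split_ifs
    · exact (meas_cylN Wk n v t).inter (meas_extT Wk (n + 1) x t')
    · exact MeasurableSet.empty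

lemma union_step (hd : 0 < d) {ι : Type} [Countable ι] (f : ι → Set Ω) {n : ℕ} (hn : 1 ≤ n)
    (x' : Fin d × Bool) (ε' : Bool)
    (hf : ∀ i, ∃ v t, f i = cylN Wk n v t ∧ v n = x' ∧ pb (t n) = ε')
    (hdisj : Pairwise (Function.onFun Disjoint f)) (x : Fin d × Bool) (ε : Bool) :
    μ ((⋃ i, f i) ∩ extP Wk (n + 1) x ε)
      = (if x = forbE x' ε' then 0 else 1) * ENNReal.ofReal ((2 * (d : ℝ) - 1)⁻¹)
        * (wB Wk ε * μ (⋃ i, f i)) := by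
  have hmeasf : ∀ i, MeasurableSet (f i) := by
    intro i
    obtain ⟨v, t, heq, _, _⟩ := hf i
    rw [heq]; exact meas_cylN Wk n v t
  have hdisj2 : Pairwise (Function.onFun Disjoint fun i => f i ∩ extP Wk (n + 1) x ε) := by
    intro a b hab
    exact Disjoint.mono Set.inter_subset_left Set.inter_subset_left (hdisj hab)
  rw [Set.iUnion_inter, measure_iUnion hdisj2
    (fun i => (hmeasf i).inter (meas_extP Wk (n + 1) x ε)), measure_iUnion hdisj hmeasf]
  have hterm : ∀ i, μ (f i ∩ extP Wk (n + 1) x ε)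
      = ((if x = forbE x' ε' then 0 else 1) * ENNReal.ofReal ((2 * (d : ℝ) - 1)⁻¹) * wB Wk ε)
        * μ (f i) := by
    intro i
    obtain ⟨v, t, heq, hx', hε'⟩ := hf i
    rw [heq, step_parity Wk hd hn v t x ε, hx', hε']
    ring
  rw [tsum_congr hterm, ENNReal.tsum_mul_left]
  ring

/-! ### The state events `A` -/

def Aset (Wk : ReinforcedWalk d Ω μ) (m k : ℕ) (u x : Fin d × Bool) (ε : Bool) : Set Ω :=
  {ω | Wk.D m ω = vec d u ∧ Odd (Wk.T m ω)} ∩ extP Wk k x ε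

lemma meas_Aset (m k : ℕ) (u x : Fin d × Bool) (ε : Bool) : MeasurableSet (Aset Wk m k u x ε) :=
  ((measD_eq Wk m _).inter (measT_mem Wk m {t | Odd t})).inter (meas_extP Wk k x ε)

def padF {α : Type*} (a₀ : α) (k : ℕ) (g : Fin k → α) (m : ℕ) : α :=
  if h : 1 ≤ m ∧ m ≤ k then g ⟨m - 1, by omega⟩ else a₀

lemma padF_eq {α : Type*} (a₀ : α) (k : ℕ) (g : Fin k → α) (m : ℕ) (h1 : 1 ≤ m) (h2 : m ≤ k) :
    padF a₀ k g m = g ⟨m - 1, by omega⟩ := dif_pos ⟨h1, h2⟩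

lemma Aset_decomp {m k : ℕ} (hm : 1 ≤ m) (hmk : m ≤ k) (u x : Fin d × Bool) (ε : Bool) :
    ∃ (ι : Type) (_ : Countable ι) (f : ι → Set Ω),
      (Aset Wk m k u x ε = ⋃ i, f i) ∧
      (∀ i, ∃ v t, f i = cylN Wk k v t ∧ v k = x ∧ pb (t k) = ε) ∧
      Pairwise (Function.onFun Disjoint f) := by
  have hk : 1 ≤ k := le_trans hm hmk
  have hmlt : m - 1 < k := by omega
  have hklt : k - 1 < k := by omega
  refine ⟨{s : (Fin k → Fin d × Bool) × (Fin k → ℕ) //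
      s.1 ⟨m - 1, hmlt⟩ = u ∧ Odd (s.2 ⟨m - 1, hmlt⟩) ∧ s.1 ⟨k - 1, hklt⟩ = x
        ∧ pb (s.2 ⟨k - 1, hklt⟩) = ε},
    inferInstance,
    fun s => cylN Wk k (padF u k s.val.1) (padF 0 k s.val.2), ?_, ?_, ?_⟩
  · ext ω
    constructor
    · rintro ⟨⟨hDm, hTm⟩, hDk, hTk⟩
      have hch : ∀ i : Fin k, ∃ e : Fin d × Bool, Wk.D (i.val + 1) ω = vec d e := by
        intro i
        obtain ⟨e, he⟩ := exists_code (Wk.D_mem (i.val + 1) ω)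
        exact ⟨e, he.symm⟩
      choose gv hgv using hch
      have hm1 : m - 1 + 1 = m := by omega
      have hk1 : k - 1 + 1 = k := by omega
      refine Set.mem_iUnion.mpr ⟨⟨(gv, fun i => Wk.T (i.val + 1) ω), ?_, ?_, ?_, ?_⟩, ?_⟩
      · apply vec_injective
        rw [← hgv ⟨m - 1, hmlt⟩]
        show Wk.D (m - 1 + 1) ω = vec d u
        rw [hm1]; exact hDm
      · show Odd (Wk.T (m - 1 + 1) ω)
        rw [hm1]; exact hTm
      · apply vec_injective
        rw [← hgv ⟨k - 1, hklt⟩]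
        show Wk.D (k - 1 + 1) ω = vec d x
        rw [hk1]; exact hDk
      · show pb (Wk.T (k - 1 + 1) ω) = ε
        rw [hk1]; exact hTk
      · intro m' hm'1 hm'2
        rw [padF_eq u k _ m' hm'1 hm'2, padF_eq 0 k _ m' hm'1 hm'2]
        have hmm : m' - 1 + 1 = m' := by omega
        constructor
        · conv_lhs => rw [← hmm]
          exact hgv ⟨m' - 1, by omega⟩
        · show Wk.T m' ω = Wk.T (m' - 1 + 1) ω
          conv_lhs => rw [← hmm]
    · intro hω
      rw [Set.mem_iUnion] at hω
      obtain ⟨⟨s, hs1, hs2, hs3, hs4⟩, hωs⟩ := hω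
      have hDmem := hωs m hm hmk
      rw [padF_eq u k _ m hm hmk, padF_eq 0 k _ m hm hmk] at hDmem
      have hDkm := hωs k hk le_rfl
      rw [padF_eq u k _ k hk le_rfl, padF_eq 0 k _ k hk le_rfl] at hDkm
      refine ⟨⟨?_, ?_⟩, ?_, ?_⟩
      · rw [hDmem.1, hs1]
      · rw [hDmem.2]; exact hs2
      · rw [hDkm.1, hs3]
      · rw [hDkm.2]; exact hs4
  · rintro ⟨s, hs⟩
    exact ⟨padF u k s.1, padF 0 k s.2, rfl,
      by rw [padF_eq u k _ k hk le_rfl]; exact hs.2.2.1,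
      by rw [padF_eq 0 k _ k hk le_rfl]; exact hs.2.2.2⟩
  · rintro ⟨s, hs⟩ ⟨s', hs'⟩ hne
    have hv : s ≠ s' := fun h => hne (Subtype.ext h)
    simp only [Function.onFun]
    apply Set.disjoint_left.mpr
    intro ω h1 h2
    apply hv
    have hcomp : ∀ i : Fin k, s.1 i = s'.1 i ∧ s.2 i = s'.2 i := by
      intro i
      have hi := i.isLt
      have e1 := h1 (i.val + 1) (by omega) (by omega)
      have e2 := h2 (i.val + 1) (by omega) (by omega)
      rw [padF_eq u k s.1 (i.val + 1) (by omega) (by omega),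
        padF_eq 0 k s.2 (i.val + 1) (by omega) (by omega)] at e1
      rw [padF_eq u k s'.1 (i.val + 1) (by omega) (by omega),
        padF_eq 0 k s'.2 (i.val + 1) (by omega) (by omega)] at e2
      have hidx : (⟨i.val + 1 - 1, by omega⟩ : Fin k) = i := by
        apply Fin.ext; simp
      rw [hidx] at e1 e2
      exact ⟨vec_injective (e1.1.symm.trans e2.1), e1.2.symm.trans e2.2⟩
    exact Prod.ext (funext fun i => (hcomp i).1) (funext fun i => (hcomp i).2)

lemma Aset_step (hd : 0 < d) {m k : ℕ} (hm : 1 ≤ m) (hmk : m ≤ k) (u x : Fin d × Bool)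
    (ε : Bool) :
    μ (Aset Wk m (k + 1) u x ε) = ∑ y : (Fin d × Bool) × Bool,
      ((if x = forbE y.1 y.2 then 0 else 1) * ENNReal.ofReal ((2 * (d : ℝ) - 1)⁻¹)
        * (wB Wk ε * μ (Aset Wk m k u y.1 y.2))) := by
  have hk : 1 ≤ k := le_trans hm hmk
  have hcover : Aset Wk m (k + 1) u x ε
      = ⋃ y ∈ (Finset.univ : Finset ((Fin d × Bool) × Bool)),
          (Aset Wk m k u y.1 y.2 ∩ extP Wk (k + 1) x ε) := by
    ext ω
    simp only [Set.mem_iUnion, Finset.mem_univ, Set.mem_inter_iff, exists_prop, true_and]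
    constructor
    · rintro ⟨hbase, hext⟩
      obtain ⟨e, he⟩ := exists_code (Wk.D_mem k ω)
      exact ⟨(e, pb (Wk.T k ω)), ⟨⟨hbase, he.symm, rfl⟩, hext⟩⟩
    · rintro ⟨y, ⟨hbase, _⟩, hext⟩
      exact ⟨hbase, hext⟩
  rw [hcover, measure_biUnion_finset]
  · refine Finset.sum_congr rfl fun y _ => ?_
    obtain ⟨ι, hcnt, f, hfeq, hff, hdisj⟩ := Aset_decomp Wk hm hmk u y.1 y.2
    haveI := hcnt
    rw [hfeq, union_step Wk hd f hk y.1 y.2 hff hdisj x ε]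
  · rintro y1 - y2 - hne
    simp only [Function.onFun]
    apply Set.disjoint_left.mpr
    rintro ω ⟨⟨_, hD1, hT1⟩, _⟩ ⟨⟨_, hD2, hT2⟩, _⟩
    exact hne (Prod.ext (vec_injective (hD1.symm.trans hD2)) (hT1.symm.trans hT2))
  · intro y _
    exact (meas_Aset Wk m k u y.1 y.2).inter (meas_extP Wk (k + 1) x ε)

/-! ### The signed sums `ψ` -/

def psi (Wk : ReinforcedWalk d Ω μ) (m k : ℕ) (ε : Bool) : ℝ :=
  ∑ u : Fin d × Bool, ∑ x : Fin d × Bool, inn d u x * (μ (Aset Wk m k u x ε)).toReal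

lemma meas_odd_eq {m : ℕ} (hm : 1 ≤ m) :
    μ {ω | Odd (Wk.T m ω)} = μ {ω | Odd (Wk.T 1 ω)} := by
  obtain ⟨m', rfl⟩ : ∃ m', m = m' + 1 := ⟨m - 1, by omega⟩
  have hid := Wk.T_ident m'
  have h1 : {ω | Odd (Wk.T (m' + 1) ω)} = Wk.T (m' + 1) ⁻¹' {t | Odd t} := rfl
  have h2 : {ω | Odd (Wk.T 1 ω)} = Wk.T 1 ⁻¹' {t | Odd t} := rfl
  rw [h1, h2, ← Measure.map_apply (Wk.measT (m' + 1)) trivial,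
    ← Measure.map_apply (Wk.measT 1) trivial, hid.map_eq]

lemma psi_self_true {m : ℕ} (hm : 1 ≤ m) : psi Wk m m true = Wk.p := by
  have hA : ∀ u x : Fin d × Bool, Aset Wk m m u x true
      = if x = u then {ω | Wk.D m ω = vec d u ∧ Odd (Wk.T m ω)} else ∅ := by
    intro u x
    by_cases hxu : x = u
    · subst hxu
      rw [if_pos rfl]
      ext ω
      constructor
      · rintro ⟨h, _⟩; exact h
      · rintro ⟨h1, h2⟩
        exact ⟨⟨h1, h2⟩, h1, by simp [pb, h2]⟩
    · rw [if_neg hxu]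
      apply Set.eq_empty_iff_forall_notMem.mpr
      rintro ω ⟨⟨h1, _⟩, h2, _⟩
      exact hxu (vec_injective (h2.symm.trans h1))
  have hpsi : psi Wk m m true
      = ∑ u : Fin d × Bool, (μ {ω | Wk.D m ω = vec d u ∧ Odd (Wk.T m ω)}).toReal := by
    unfold psi
    refine Finset.sum_congr rfl fun u _ => ?_
    rw [Finset.sum_congr rfl fun x _ => by rw [hA u x]]
    have hterm : ∀ x : Fin d × Bool,
        inn d u x * (μ (if x = u then {ω | Wk.D m ω = vec d u ∧ Odd (Wk.T m ω)} else ∅)).toReal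
          = if x = u then (μ {ω | Wk.D m ω = vec d u ∧ Odd (Wk.T m ω)}).toReal else 0 := by
      intro x
      by_cases hxu : x = u
      · subst hxu; simp [inn_self]
      · simp [hxu]
    rw [Finset.sum_congr rfl fun x _ => hterm x, Finset.sum_ite_eq' Finset.univ u]
    simp
  rw [hpsi]
  have hpart : ∑ u : Fin d × Bool, μ {ω | Wk.D m ω = vec d u ∧ Odd (Wk.T m ω)}
      = μ {ω | Odd (Wk.T m ω)} := by
    rw [← measure_biUnion_finset]
    · congr 1
      ext ω
      simp only [Set.mem_iUnion, Finset.mem_univ, exists_prop, true_and, Set.mem_setOf_eq]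
      constructor
      · rintro ⟨u, _, h⟩; exact h
      · intro h
        obtain ⟨e, he⟩ := exists_code (Wk.D_mem m ω)
        exact ⟨e, he.symm, h⟩
    · rintro u1 - u2 - hne
      simp only [Function.onFun]
      apply Set.disjoint_left.mpr
      rintro ω ⟨h1, _⟩ ⟨h2, _⟩
      exact hne (vec_injective (h1.symm.trans h2))
    · intro u _
      exact (measD_eq Wk m _).inter (measT_mem Wk m {t | Odd t})
  rw [← ENNReal.toReal_sum (fun u _ => measure_ne_top μ _), hpart, meas_odd_eq Wk hm,
    ReinforcedWalk.p]

lemma psi_self_false {m : ℕ} : psi Wk m m false = 0 := by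
  unfold psi
  refine Finset.sum_eq_zero fun u _ => Finset.sum_eq_zero fun x _ => ?_
  have : Aset Wk m m u x false = ∅ := by
    apply Set.eq_empty_iff_forall_notMem.mpr
    rintro ω ⟨⟨_, hodd⟩, _, hpb⟩
    simp [pb, hodd] at hpb
  simp [this]

lemma psi_rec (hd : 0 < d) {m k : ℕ} (hm : 1 ≤ m) (hmk : m ≤ k) (ε : Bool) :
    psi Wk m (k + 1) ε
      = (wB Wk ε).toReal * ((2 * (d : ℝ) - 1)⁻¹ * (psi Wk m k true - psi Wk m k false)) := by
  have hd1 : (1 : ℝ) ≤ (d : ℝ) := by exact_mod_cast hd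
  have hcnn : (0 : ℝ) ≤ (2 * (d : ℝ) - 1)⁻¹ := by apply inv_nonneg.mpr; linarith
  have htr : ∀ u x : Fin d × Bool, (μ (Aset Wk m (k + 1) u x ε)).toReal
      = ∑ y : (Fin d × Bool) × Bool, (if x = forbE y.1 y.2 then (0 : ℝ) else 1)
          * ((2 * (d : ℝ) - 1)⁻¹ * ((wB Wk ε).toReal * (μ (Aset Wk m k u y.1 y.2)).toReal)) := by
    intro u x
    rw [Aset_step Wk hd hm hmk u x ε, ENNReal.toReal_sum]
    · refine Finset.sum_congr rfl fun y _ => ?_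
      rw [ENNReal.toReal_mul, ENNReal.toReal_mul, ENNReal.toReal_mul,
        ENNReal.toReal_ofReal hcnn]
      split_ifs <;> simp <;> ring
    · intro y _
      refine ENNReal.mul_ne_top (ENNReal.mul_ne_top ?_ ENNReal.ofReal_ne_top)
        (ENNReal.mul_ne_top (measure_ne_top μ _) (measure_ne_top μ _))
      split_ifs <;> simp
  calc psi Wk m (k + 1) ε
      = ∑ u : Fin d × Bool, ∑ y : (Fin d × Bool) × Bool,
          (if y.2 then inn d u y.1 else - inn d u y.1)
            * ((2 * (d : ℝ) - 1)⁻¹ * ((wB Wk ε).toReal * (μ (Aset Wk m k u y.1 y.2)).toReal)) := by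
        unfold psi
        refine Finset.sum_congr rfl fun u _ => ?_
        rw [Finset.sum_congr rfl fun x _ => by rw [htr u x]]
        simp only [Finset.mul_sum]
        rw [Finset.sum_comm]
        refine Finset.sum_congr rfl fun y _ => ?_
        have hre : ∀ x : Fin d × Bool,
            inn d u x * ((if x = forbE y.1 y.2 then (0 : ℝ) else 1)
              * ((2 * (d : ℝ) - 1)⁻¹ * ((wB Wk ε).toReal * (μ (Aset Wk m k u y.1 y.2)).toReal)))
            = ((if x = forbE y.1 y.2 then (0 : ℝ) else 1) * inn d u x)
              * ((2 * (d : ℝ) - 1)⁻¹ * ((wB Wk ε).toReal * (μ (Aset Wk m k u y.1 y.2)).toReal)) := by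
          intro x; ring
        rw [Finset.sum_congr rfl fun x _ => hre x, ← Finset.sum_mul, sum_ite_inn]
        congr 1
        rw [inn_forbE]
        cases y.2 <;> simp
    _ = (wB Wk ε).toReal * ((2 * (d : ℝ) - 1)⁻¹ * (psi Wk m k true - psi Wk m k false)) := by
        rw [psi, psi, ← Finset.sum_sub_distrib, Finset.mul_sum, Finset.mul_sum]
        refine Finset.sum_congr rfl fun u _ => ?_
        rw [Fintype.sum_prod_type]
        have hbool : ∀ x' : Fin d × Bool, ∑ b : Bool,
            (if b then inn d u x' else - inn d u x')
              * ((2 * (d : ℝ) - 1)⁻¹ * ((wB Wk ε).toReal * (μ (Aset Wk m k u x' b)).toReal))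
            = inn d u x'
              * ((2 * (d : ℝ) - 1)⁻¹ * ((wB Wk ε).toReal * (μ (Aset Wk m k u x' true)).toReal))
              - inn d u x'
              * ((2 * (d : ℝ) - 1)⁻¹ * ((wB Wk ε).toReal * (μ (Aset Wk m k u x' false)).toReal)) := by
          intro x'
          rw [sumBool]
          simp only [if_true, Bool.false_eq_true, if_false]
          ring
        rw [Finset.sum_congr rfl fun x' _ => hbool x', ← Finset.sum_sub_distrib,
          Finset.mul_sum, Finset.mul_sum]
        refine Finset.sum_congr rfl fun x' _ => ?_
        ring

lemma wB_true_toReal : (wB Wk true).toReal = Wk.p := by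
  have hset : {ω | pb (Wk.T 1 ω) = true} = {ω | Odd (Wk.T 1 ω)} := by
    ext ω; simp [pb]
  rw [wB, hset, ReinforcedWalk.p]

lemma wB_false_toReal : (wB Wk false).toReal = 1 - Wk.p := by
  have hset : {ω | pb (Wk.T 1 ω) = false} = {ω | Odd (Wk.T 1 ω)}ᶜ := by
    ext ω; simp [pb]
  have hmeas : MeasurableSet {ω | Odd (Wk.T 1 ω)} := measT_mem Wk 1 {t | Odd t}
  rw [wB, hset, measure_compl hmeas (measure_ne_top μ _), measure_univ,
    ENNReal.toReal_sub_of_le prob_le_one ENNReal.one_ne_top, ENNReal.toReal_one,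
    ReinforcedWalk.p]

lemma psi_diff (hd : 0 < d) {m k : ℕ} (hm : 1 ≤ m) (hmk : m ≤ k) :
    psi Wk m k true - psi Wk m k false
      = Wk.p * ((2 * Wk.p - 1) / (2 * (d : ℝ) - 1)) ^ (k - m) := by
  induction k, hmk using Nat.le_induction with
  | base =>
      rw [psi_self_true Wk hm, psi_self_false Wk]
      simp
  | succ k hmk ih =>
      rw [psi_rec Wk hd hm hmk true, psi_rec Wk hd hm hmk false, wB_true_toReal Wk,
        wB_false_toReal Wk, ih]
      have hexp : k + 1 - m = (k - m) + 1 := by omega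
      rw [hexp, pow_succ]
      field_simp
      ring

lemma psi_true_eq (hd : 0 < d) {m k : ℕ} (hm : 1 ≤ m) (hmk : m < k) :
    psi Wk m k true
      = Wk.p * ((2 * (d : ℝ) - 1)⁻¹
          * (Wk.p * ((2 * Wk.p - 1) / (2 * (d : ℝ) - 1)) ^ (k - m - 1))) := by
  obtain ⟨k', rfl⟩ : ∃ k', k = k' + 1 := ⟨k - 1, by omega⟩
  have hmk' : m ≤ k' := by omega
  rw [psi_rec Wk hd hm hmk' true, wB_true_toReal Wk, psi_diff Wk hd hm hmk']
  have hexp : k' + 1 - m - 1 = k' - m := by omega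
  rw [hexp]

/-! ### Integrals -/

def gFn (Wk : ReinforcedWalk d Ω μ) (m k : ℕ) : Ω → ℝ :=
  fun ω => (Wk.L m ω : ℝ) * (Wk.L k ω : ℝ) * (inner ℝ (Wk.D m ω) (Wk.D k ω) : ℝ)

lemma gFn_symm (m k : ℕ) : gFn Wk m k = gFn Wk k m := by
  funext ω
  simp only [gFn]
  rw [real_inner_comm]
  ring

lemma gFn_repr {m k : ℕ} (hm : 1 ≤ m) (hmk : m ≤ k) :
    gFn Wk m k = fun ω => ∑ y : (Fin d × Bool) × (Fin d × Bool),
      (Aset Wk m k y.1 y.2 true).indicator (fun _ => inn d y.1 y.2) ω := by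
  funext ω
  by_cases hodd : Odd (Wk.T m ω) ∧ Odd (Wk.T k ω)
  · obtain ⟨e1, he1⟩ := exists_code (Wk.D_mem m ω)
    obtain ⟨e2, he2⟩ := exists_code (Wk.D_mem k ω)
    have hmem : ω ∈ Aset Wk m k e1 e2 true :=
      ⟨⟨he1.symm, hodd.1⟩, he2.symm, by simp [pb, hodd.2]⟩
    rw [Finset.sum_eq_single (e1, e2)]
    · rw [Set.indicator_of_mem hmem]
      simp only [gFn, ReinforcedWalk.L, if_pos hodd.1, if_pos hodd.2, Nat.cast_one, one_mul]
      show (inner ℝ (Wk.D m ω) (Wk.D k ω) : ℝ) = (inner ℝ (vec d e1) (vec d e2) : ℝ)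
      rw [he1, he2]
    · rintro ⟨u, x⟩ - hne
      apply Set.indicator_of_notMem
      rintro ⟨⟨h1, _⟩, h2, _⟩
      apply hne
      have hu : u = e1 := vec_injective (h1.symm.trans he1.symm)
      have hx : x = e2 := vec_injective (h2.symm.trans he2.symm)
      rw [hu, hx]
    · intro h
      exact absurd (Finset.mem_univ _) h
  · have hL : (Wk.L m ω : ℝ) * (Wk.L k ω : ℝ) = 0 := by
      rcases not_and_or.mp hodd with h | h <;> simp [ReinforcedWalk.L, h]
    have hzero : ∀ y : (Fin d × Bool) × (Fin d × Bool),
        (Aset Wk m k y.1 y.2 true).indicator (fun _ => inn d y.1 y.2) ω = 0 := by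
      intro y
      apply Set.indicator_of_notMem
      rintro ⟨⟨_, h1⟩, _, h2⟩
      rcases not_and_or.mp hodd with h | h
      · exact h h1
      · rw [pb, decide_eq_true_eq] at h2
        exact h h2
    rw [Finset.sum_eq_zero fun y _ => hzero y]
    simp only [gFn]
    rw [hL, zero_mul]

lemma integrable_gFn {m k : ℕ} (hm : 1 ≤ m) (hk : 1 ≤ k) : Integrable (gFn Wk m k) μ := by
  rcases le_total m k with h | h
  · rw [gFn_repr Wk hm h]
    exact integrable_finset_sum _ fun y _ =>
      (integrable_const (inn d y.1 y.2)).indicator (meas_Aset Wk m k y.1 y.2 true)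
  · rw [gFn_symm Wk m k, gFn_repr Wk hk h]
    exact integrable_finset_sum _ fun y _ =>
      (integrable_const (inn d y.1 y.2)).indicator (meas_Aset Wk k m y.1 y.2 true)

lemma integral_gFn {m k : ℕ} (hm : 1 ≤ m) (hmk : m ≤ k) :
    ∫ ω, gFn Wk m k ω ∂μ = psi Wk m k true := by
  rw [gFn_repr Wk hm hmk,
    integral_finset_sum _ (fun y _ =>
      (integrable_const (inn d y.1 y.2)).indicator (meas_Aset Wk m k y.1 y.2 true))]
  unfold psi
  rw [Fintype.sum_prod_type]
  refine Finset.sum_congr rfl fun u _ => Finset.sum_congr rfl fun x _ => ?_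
  rw [integral_indicator_const _ (meas_Aset Wk m k u x true), smul_eq_mul, mul_comm]
  rfl

lemma norm_sq_W (n : ℕ) (ω : Ω) :
    ‖Wk.W n ω‖ ^ 2 = ∑ m ∈ Finset.Icc 1 n, ∑ k ∈ Finset.Icc 1 n, gFn Wk m k ω := by
  rw [← real_inner_self_eq_norm_sq]
  show (inner ℝ (∑ m ∈ Finset.Icc 1 n, (Wk.L m ω : ℝ) • Wk.D m ω)
      (∑ m ∈ Finset.Icc 1 n, (Wk.L m ω : ℝ) • Wk.D m ω) : ℝ) = _
  rw [sum_inner]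
  refine Finset.sum_congr rfl fun m _ => ?_
  rw [inner_sum]
  refine Finset.sum_congr rfl fun k _ => ?_
  rw [real_inner_smul_left, real_inner_smul_right]
  simp only [gFn]
  ring

end Walk

/-! ### Final algebra -/

set_option maxHeartbeats 1000000 in
lemma step_identity (Dr p Q c : ℝ) (h2D : 2 * Dr - 1 ≠ 0) (hDp : Dr - p ≠ 0)
    (hq1 : (2 * p - 1) / (2 * Dr - 1) - 1 ≠ 0) :
    p + p * ((2 * Dr - 1)⁻¹ * (p * ((Q - 1) / ((2 * p - 1) / (2 * Dr - 1) - 1))))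
      + (p * ((2 * Dr - 1)⁻¹ * (p * ((Q - 1) / ((2 * p - 1) / (2 * Dr - 1) - 1))))
        + (c * (Dr * p / (Dr - p))
          + p ^ 2 * (2 * Dr - 1) / (2 * (Dr - p) ^ 2) * (Q - 1)))
    = (c + 1) * (Dr * p / (Dr - p))
      + p ^ 2 * (2 * Dr - 1) / (2 * (Dr - p) ^ 2) * (Q * ((2 * p - 1) / (2 * Dr - 1)) - 1) := by
  have hq2 : (2 * p - 1) / (2 * Dr - 1) - 1 = (2 * p - 2 * Dr) / (2 * Dr - 1) := by
    field_simp
    ring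
  have hpd2 : 2 * p - 2 * Dr ≠ 0 := by intro h; apply hDp; linarith
  have hpD' : p - Dr ≠ 0 := by intro h; apply hDp; linarith
  rw [hq2, div_div_eq_mul_div]
  field_simp
  ring

set_option maxHeartbeats 1000000 in
lemma algebra_sum (Dr p : ℝ) (hD : 1 ≤ Dr) (hpD : p < Dr) :
    ∀ n : ℕ, 1 ≤ n →
      (∑ m ∈ Finset.Icc 1 n, ∑ k ∈ Finset.Icc 1 n,
        (if m = k then p
         else p * ((2 * Dr - 1)⁻¹
            * (p * ((2 * p - 1) / (2 * Dr - 1)) ^ (max m k - min m k - 1)))))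
      = n * (Dr * p / (Dr - p))
        + (p ^ 2 * (2 * Dr - 1) / (2 * (Dr - p) ^ 2)) * (((2 * p - 1) / (2 * Dr - 1)) ^ n - 1) := by
  have h2D : (2 * Dr - 1) ≠ 0 := by intro h; linarith
  have hDp0 : (0:ℝ) < Dr - p := by linarith
  have hDp : Dr - p ≠ 0 := ne_of_gt hDp0
  have hqne : (2 * p - 1) / (2 * Dr - 1) ≠ 1 := by
    intro h
    rw [div_eq_one_iff_eq h2D] at h
    linarith
  have hq1 : (2 * p - 1) / (2 * Dr - 1) - 1 ≠ 0 := sub_ne_zero.mpr hqne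
  intro n hn
  induction n, hn using Nat.le_induction with
  | base =>
      simp only [Finset.Icc_self, Finset.sum_singleton, if_pos rfl, ↓reduceIte, pow_one]
      rw [show (p ^ 2 * (2 * Dr - 1) / (2 * (Dr - p) ^ 2)) * ((2 * p - 1) / (2 * Dr - 1) - 1)
          = -p ^ 2 / (Dr - p) by field_simp; ring]
      field_simp
      ring
  | succ n hn ih =>
      have hnot : (n + 1) ∉ Finset.Icc 1 n := by simp
      rw [← Finset.insert_Icc_right_eq_Icc_add_one (by omega : 1 ≤ n + 1)]
      simp only [Finset.sum_insert hnot]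
      rw [Finset.sum_add_distrib, ih]
      rw [show ((n + 1) ⊔ (n + 1) - (n + 1) ⊓ (n + 1) - 1) = 0 from by omega]
      rw [if_pos (by trivial)]
      have hoff1 : ∀ k ∈ Finset.Icc 1 n,
          (if n + 1 = k then p
           else p * ((2 * Dr - 1)⁻¹
              * (p * ((2 * p - 1) / (2 * Dr - 1)) ^ (max (n+1) k - min (n+1) k - 1))))
          = p * ((2 * Dr - 1)⁻¹ * (p * ((2 * p - 1) / (2 * Dr - 1)) ^ (n - k))) := by
        intro k hk
        simp only [Finset.mem_Icc] at hk
        rw [if_neg (by omega), max_eq_left (by omega), min_eq_right (by omega),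
          show n + 1 - k - 1 = n - k from by omega]
      have hoff2 : ∀ m ∈ Finset.Icc 1 n,
          (if m = n + 1 then p
           else p * ((2 * Dr - 1)⁻¹
              * (p * ((2 * p - 1) / (2 * Dr - 1)) ^ (max m (n+1) - min m (n+1) - 1))))
          = p * ((2 * Dr - 1)⁻¹ * (p * ((2 * p - 1) / (2 * Dr - 1)) ^ (n - m))) := by
        intro m hm
        simp only [Finset.mem_Icc] at hm
        rw [if_neg (by omega), max_eq_right (by omega), min_eq_left (by omega),
          show n + 1 - m - 1 = n - m from by omega]
      rw [Finset.sum_congr rfl hoff1, Finset.sum_congr rfl hoff2]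
      have hgeo : ∑ m ∈ Finset.Icc 1 n, ((2 * p - 1) / (2 * Dr - 1)) ^ (n - m)
          = ((((2 * p - 1) / (2 * Dr - 1)) ^ n - 1) / ((2 * p - 1) / (2 * Dr - 1) - 1)) := by
        rw [← Finset.Ico_add_one_right_eq_Icc, Finset.sum_Ico_eq_sum_range]
        rw [show n + 1 - 1 = n from rfl]
        rw [show (fun i => ((2 * p - 1) / (2 * Dr - 1)) ^ (n - (1 + i)))
            = (fun i => ((2 * p - 1) / (2 * Dr - 1)) ^ (n - 1 - i)) from
          funext fun i => by rw [show n - (1 + i) = n - 1 - i from by omega]]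
        rw [Finset.sum_range_reflect (fun j => ((2 * p - 1) / (2 * Dr - 1)) ^ j) n]
        exact geom_sum_eq hqne n
      have hpull : ∀ S : Finset ℕ,
          (∑ m ∈ S, p * ((2 * Dr - 1)⁻¹ * (p * ((2 * p - 1) / (2 * Dr - 1)) ^ (n - m))))
            = p * ((2 * Dr - 1)⁻¹
              * (p * ∑ m ∈ S, ((2 * p - 1) / (2 * Dr - 1)) ^ (n - m))) := by
        intro S
        rw [Finset.mul_sum, Finset.mul_sum, Finset.mul_sum]
      rw [hpull, hgeo, pow_succ]
      push_cast
      exact step_identity Dr p (((2 * p - 1) / (2 * Dr - 1)) ^ n) (n : ℝ) h2D hDp hq1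

end RWAux
/-- With `p = P(T odd)` (and `p < 1` if `d = 1`), for every `n ≥ 1`,
`E(|W^r_n|²) = n d p/(d-p) + (p²(2d-1)/(2(d-p)²)) (((2p-1)/(2d-1))^n - 1)`. -/
theorem reinforced_second_moment_formula
    {d : ℕ} (hd : 1 ≤ d) {Ω : Type} [MeasurableSpace Ω] {μ : Measure Ω}
    [IsProbabilityMeasure μ] (Wk : ReinforcedWalk d Ω μ)
    (hp : d = 1 → Wk.p < 1) :
    ∀ n : ℕ, 1 ≤ n →
      ∫ ω, ‖Wk.W n ω‖ ^ 2 ∂μ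
        = (n : ℝ) * ((d : ℝ) * Wk.p / ((d : ℝ) - Wk.p))
          + (Wk.p ^ 2 * (2 * (d : ℝ) - 1) / (2 * ((d : ℝ) - Wk.p) ^ 2))
            * (((2 * Wk.p - 1) / (2 * (d : ℝ) - 1)) ^ n - 1) := by
  intro n hn
  have hd0 : 0 < d := hd
  have hd1 : (1 : ℝ) ≤ (d : ℝ) := by exact_mod_cast hd
  have hp1 : Wk.p ≤ 1 := by
    rw [ReinforcedWalk.p]
    calc (μ {ω | Odd (Wk.T 1 ω)}).toReal
        ≤ (1 : ENNReal).toReal := ENNReal.toReal_mono ENNReal.one_ne_top prob_le_one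
      _ = 1 := ENNReal.toReal_one
  have hplt : Wk.p < (d : ℝ) := by
    by_cases hd1' : d = 1
    · exact lt_of_lt_of_le (hp hd1') hd1
    · have h2 : (2 : ℝ) ≤ (d : ℝ) := by exact_mod_cast (by omega : 2 ≤ d)
      linarith
  have hIcc : ∀ m ∈ Finset.Icc 1 n, 1 ≤ m := fun m hm => (Finset.mem_Icc.mp hm).1
  have hexp : ∫ ω, ‖Wk.W n ω‖ ^ 2 ∂μ
      = ∑ m ∈ Finset.Icc 1 n, ∑ k ∈ Finset.Icc 1 n, ∫ ω, RWAux.gFn Wk m k ω ∂μ := by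
    have h1 : ∫ ω, ‖Wk.W n ω‖ ^ 2 ∂μ
        = ∫ ω, ∑ m ∈ Finset.Icc 1 n, ∑ k ∈ Finset.Icc 1 n, RWAux.gFn Wk m k ω ∂μ := by
      refine integral_congr_ae (Filter.Eventually.of_forall fun ω => ?_)
      exact RWAux.norm_sq_W Wk n ω
    rw [h1, integral_finset_sum _ (fun m hm => integrable_finset_sum _ fun k _hk =>
      RWAux.integrable_gFn Wk (hIcc m hm) (hIcc _ _hk))]
    exact Finset.sum_congr rfl fun m hm => integral_finset_sum _ fun k hk =>
      RWAux.integrable_gFn Wk (hIcc m hm) (hIcc k hk)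
  rw [hexp]
  have hval : ∀ m ∈ Finset.Icc 1 n, ∀ k ∈ Finset.Icc 1 n, ∫ ω, RWAux.gFn Wk m k ω ∂μ
      = (if m = k then Wk.p
         else Wk.p * ((2 * (d : ℝ) - 1)⁻¹
            * (Wk.p * ((2 * Wk.p - 1) / (2 * (d : ℝ) - 1)) ^ (max m k - min m k - 1)))) := by
    intro m hm k hk
    have hm1 := hIcc m hm
    have hk1 := hIcc k hk
    rcases lt_trichotomy m k with h | h | h
    · rw [if_neg (by omega), RWAux.integral_gFn Wk hm1 h.le, RWAux.psi_true_eq Wk hd0 hm1 h,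
        max_eq_right h.le, min_eq_left h.le]
    · subst h
      rw [if_pos rfl, RWAux.integral_gFn Wk hm1 le_rfl, RWAux.psi_self_true Wk hm1]
    · rw [if_neg (by omega), RWAux.gFn_symm Wk m k, RWAux.integral_gFn Wk hk1 h.le,
        RWAux.psi_true_eq Wk hd0 hk1 h, max_eq_left h.le, min_eq_right h.le]
  rw [Finset.sum_congr rfl fun m hm => Finset.sum_congr rfl fun k hk => hval m hm k hk]
  exact RWAux.algebra_sum (d : ℝ) Wk.p hd1 hplt n hn
end
end

section
/- Let p := P(T is odd), and if d = 1 assume p < 1. Then for all m ≥ 1 and k ≥ 1, E( (D_m · D_{m+k}) L_m L_{m+k} ) = (p^2/(2d−1))·((2p−1)/(2d−1))^{k−1}, where · denotes the Euclidean inner product on ℝ^d. -/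
open MeasureTheory ProbabilityTheory Filter

noncomputable section

namespace RWAux
open scoped Classical

variable {d : ℕ}

/-- The `2d` unit vectors as a `Finset`. -/
def UF (d : ℕ) : Finset (EuclideanSpace ℝ (Fin d)) :=
  (Finset.univ.image fun i : Fin d => EuclideanSpace.single i (1 : ℝ)) ∪
    (Finset.univ.image fun i : Fin d => EuclideanSpace.single i (-1 : ℝ))

theorem mem_UF_iff {x : EuclideanSpace ℝ (Fin d)} : x ∈ UF d ↔ x ∈ unitVecs d := by
  simp [UF, unitVecs, or_and_right, exists_or, eq_comm]

theorem single_injective : Function.Injective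
    (fun i : Fin d => EuclideanSpace.single i (1 : ℝ)) := by
  intro i j h
  by_contra hij
  have := congrArg (fun v : EuclideanSpace ℝ (Fin d) => v i) h
  simp [EuclideanSpace.single_apply, hij] at this

theorem single_neg_injective : Function.Injective
    (fun i : Fin d => EuclideanSpace.single i (-1 : ℝ)) := by
  intro i j h
  by_contra hij
  have := congrArg (fun v : EuclideanSpace ℝ (Fin d) => v i) h
  simp [EuclideanSpace.single_apply, hij] at this

theorem UF_disj : Disjoint (Finset.univ.image fun i : Fin d => EuclideanSpace.single i (1 : ℝ))
    (Finset.univ.image fun i : Fin d => EuclideanSpace.single i (-1 : ℝ)) := by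
  rw [Finset.disjoint_left]
  rintro a ha hb
  simp only [Finset.mem_image, Finset.mem_univ, true_and] at ha hb
  obtain ⟨i, rfl⟩ := ha
  obtain ⟨j, hj⟩ := hb
  have := congrArg (fun v : EuclideanSpace ℝ (Fin d) => v i) hj
  rw [EuclideanSpace.single_apply, EuclideanSpace.single_apply] at this
  by_cases hij : i = j <;> simp [hij] at this <;> norm_num at this

theorem card_UF : (UF d).card = 2 * d := by
  rw [UF, Finset.card_union_of_disjoint UF_disj,
    Finset.card_image_of_injective _ single_injective,
    Finset.card_image_of_injective _ single_neg_injective]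
  simp; ring

theorem neg_single (i : Fin d) (a : ℝ) :
    -EuclideanSpace.single i a = EuclideanSpace.single i (-a) := by
  ext j
  by_cases h : j = i <;> simp [EuclideanSpace.single_apply, h]

theorem neg_mem_UF {x : EuclideanSpace ℝ (Fin d)} (hx : x ∈ UF d) : -x ∈ UF d := by
  rw [mem_UF_iff] at hx ⊢
  obtain ⟨i, h | h⟩ := hx <;> subst h <;> exact ⟨i, by simp [neg_single]⟩

theorem inner_self_UF {x : EuclideanSpace ℝ (Fin d)} (hx : x ∈ UF d) :
    (inner ℝ x x : ℝ) = 1 := by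
  rw [mem_UF_iff] at hx
  obtain ⟨i, h | h⟩ := hx <;> subst h <;>
    simp [EuclideanSpace.inner_single_left, EuclideanSpace.single_apply]

theorem sum_inner_UF (w : EuclideanSpace ℝ (Fin d)) :
    ∑ v ∈ UF d, (inner ℝ w v : ℝ) = 0 := by
  rw [UF, Finset.sum_union UF_disj,
    Finset.sum_image (fun a _ b _ h => single_injective h),
    Finset.sum_image (fun a _ b _ h => single_neg_injective h)]
  rw [← Finset.sum_add_distrib]
  simp [EuclideanSpace.inner_single_right]

theorem sum_inner_erase {u : EuclideanSpace ℝ (Fin d)} (hu : u ∈ UF d)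
    (w : EuclideanSpace ℝ (Fin d)) :
    ∑ v ∈ (UF d).erase u, (inner ℝ w v : ℝ) = -(inner ℝ w u : ℝ) := by
  have h := Finset.sum_erase_add (UF d) (fun v => (inner ℝ w v : ℝ)) hu
  rw [sum_inner_UF] at h
  linarith

theorem card_erase_UF {u : EuclideanSpace ℝ (Fin d)} (hu : u ∈ UF d) :
    ((UF d).erase u).card = 2 * d - 1 := by
  rw [Finset.card_erase_of_mem hu, card_UF]

end RWAux

namespace RWAux

section Walk
open scoped Classical
open ENNReal

variable {d : ℕ} {Ω : Type} [MeasurableSpace Ω] {μ : Measure Ω}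

/-- the excluded next direction -/
def excl (b : Bool) (u : EuclideanSpace ℝ (Fin d)) : EuclideanSpace ℝ (Fin d) :=
  if b then -u else u

theorem excl_mem_UF {b : Bool} {u : EuclideanSpace ℝ (Fin d)} (hu : u ∈ UF d) :
    excl b u ∈ UF d := by
  cases b <;> simp [excl, hu, neg_mem_UF]

variable (Wk : ReinforcedWalk d Ω μ)

/-- path of the first `n` direction/parity pairs -/
def pth (n : ℕ) (ω : Ω) : Fin n → EuclideanSpace ℝ (Fin d) × Bool :=
  fun i => (Wk.D ((i : ℕ) + 1) ω, decide (Odd (Wk.T ((i : ℕ) + 1) ω)))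

/-- cylinder event -/
def Bs (n : ℕ) (r : Fin n → EuclideanSpace ℝ (Fin d) × Bool) : Set Ω :=
  pth Wk n ⁻¹' {r}

/-- step-compatibility of a path -/
def compat (n : ℕ) (r : Fin n → EuclideanSpace ℝ (Fin d) × Bool) : Prop :=
  ∀ (k : ℕ) (h : k + 1 < n),
    (r ⟨k + 1, h⟩).1 ≠ excl (r ⟨k, Nat.lt_of_succ_lt h⟩).2 (r ⟨k, Nat.lt_of_succ_lt h⟩).1

/-- fine cylinder with exact times -/
def Acyl (n : ℕ) (r : Fin n → EuclideanSpace ℝ (Fin d) × Bool) (s : Fin n → ℕ) : Set Ω :=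
  {ω | ∀ i : Fin n, Wk.D ((i : ℕ) + 1) ω = (r i).1 ∧
    Wk.T ((i : ℕ) + 1) ω = 2 * s i + cond (r i).2 1 0}

theorem measurable_Bs (n : ℕ) (r : Fin n → EuclideanSpace ℝ (Fin d) × Bool) :
    MeasurableSet (Bs Wk n r) := by
  have : Bs Wk n r = ⋂ i : Fin n,
      (Wk.D ((i : ℕ) + 1) ⁻¹' {(r i).1} ∩
        Wk.T ((i : ℕ) + 1) ⁻¹' {t | decide (Odd t) = (r i).2}) := by
    ext ω
    simp only [Bs, Set.mem_preimage, Set.mem_singleton_iff, funext_iff, pth, Prod.ext_iff,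
      Set.mem_iInter, Set.mem_inter_iff, Set.mem_setOf_eq]
  rw [this]
  exact MeasurableSet.iInter fun i =>
    ((Wk.measD _ (measurableSet_singleton _)).inter (Wk.measT _ (by trivial)))

theorem measurable_Acyl (n : ℕ) (r : Fin n → EuclideanSpace ℝ (Fin d) × Bool) (s : Fin n → ℕ) :
    MeasurableSet (Acyl Wk n r s) := by
  have : Acyl Wk n r s = ⋂ i : Fin n,
      (Wk.D ((i : ℕ) + 1) ⁻¹' {(r i).1} ∩
        Wk.T ((i : ℕ) + 1) ⁻¹' {2 * s i + cond (r i).2 1 0}) := by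
    ext ω
    simp only [Acyl, Set.mem_iInter, Set.mem_inter_iff, Set.mem_preimage,
      Set.mem_singleton_iff, Set.mem_setOf_eq]
  rw [this]
  exact MeasurableSet.iInter fun i =>
    ((Wk.measD _ (measurableSet_singleton _)).inter (Wk.measT _ (by trivial)))

/-- the measure of a fine cylinder, via `DT_path` -/
theorem measure_Acyl {n : ℕ} (hn : 1 ≤ n) {r : Fin n → EuclideanSpace ℝ (Fin d) × Bool}
    (hr : ∀ i, (r i).1 ∈ unitVecs d) (hc : compat n r) (s : Fin n → ℕ) :
    μ (Acyl Wk n r s) =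
      ENNReal.ofReal ((2 * (d : ℝ))⁻¹ * ((2 * (d : ℝ) - 1)⁻¹) ^ (n - 1)) *
        ∏ i : Fin n, μ {ω | Wk.T 1 ω = 2 * s i + cond (r i).2 1 0} := by
  have hn0 : 0 < n := hn
  set v : ℕ → EuclideanSpace ℝ (Fin d) :=
    fun j => if h : j - 1 < n then (r ⟨j - 1, h⟩).1 else (r ⟨0, hn0⟩).1 with hv
  set t : ℕ → ℕ :=
    fun j => if h : j - 1 < n then 2 * s ⟨j - 1, h⟩ + cond (r ⟨j - 1, h⟩).2 1 0 else 0 with ht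
  have hmem : ∀ m, v m ∈ unitVecs d := by
    intro m
    by_cases h : m - 1 < n <;> simp only [hv, h, dif_pos, dif_neg, not_false_iff] <;>
      first | exact hr _ | simp [h, hr _]
  have hstep : ∀ m, 1 ≤ m → m + 1 ≤ n →
      (if Odd (t m) then v (m + 1) ≠ -v m else v (m + 1) ≠ v m) := by
    intro m hm1 hmn
    have h1 : m - 1 < n := by omega
    have h2 : m + 1 - 1 < n := by omega
    have h3 : m - 1 + 1 < n := by omega
    have hodd : Odd (t m) ↔ (r ⟨m - 1, h1⟩).2 = true := by
      simp only [ht, h1, dif_pos]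
      cases (r ⟨m - 1, h1⟩).2 <;> simp [Nat.odd_iff] <;> omega
    have hc' := hc (m - 1) h3
    have hmk : (⟨m - 1 + 1, h3⟩ : Fin n) = ⟨m + 1 - 1, h2⟩ := by
      simp only [Fin.mk.injEq]; omega
    rw [hmk] at hc'
    have hvm1 : v (m + 1) = (r ⟨m + 1 - 1, h2⟩).1 := by simp only [hv, h2, dif_pos]
    have hvm : v m = (r ⟨m - 1, h1⟩).1 := by simp only [hv, h1, dif_pos]
    by_cases hb : (r ⟨m - 1, h1⟩).2 = true
    · rw [if_pos (hodd.2 hb), hvm1, hvm]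
      rw [hb] at hc'
      simpa [excl] using hc'
    · rw [if_neg (fun h => hb (hodd.1 h)), hvm1, hvm]
      rw [Bool.not_eq_true] at hb
      rw [hb] at hc'
      simpa [excl] using hc'
  have hDT := Wk.DT_path n hn v t hmem hstep
  have hset : {ω | ∀ m, 1 ≤ m → m ≤ n → Wk.D m ω = v m ∧ Wk.T m ω = t m} = Acyl Wk n r s := by
    ext ω
    simp only [Set.mem_setOf_eq, Acyl]
    constructor
    · intro h i
      have h1 : (i : ℕ) + 1 - 1 < n := by simpa using i.isLt
      have := h ((i : ℕ) + 1) (by omega) (by omega)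
      have hi : (⟨(i : ℕ) + 1 - 1, h1⟩ : Fin n) = i :=
        Fin.ext (show (i : ℕ) + 1 - 1 = (i : ℕ) by omega)
      simp only [hv, ht, h1, dif_pos, hi] at this
      exact this
    · intro h m hm1 hmn
      have h1 : m - 1 < n := by omega
      have := h ⟨m - 1, h1⟩
      simp only at this
      have hm : m - 1 + 1 = m := by omega
      rw [hm] at this
      simp only [hv, ht, h1, dif_pos]
      exact this
  rw [hset] at hDT
  rw [hDT]
  congr 1
  rw [← Finset.Ico_add_one_right_eq_Icc, Finset.prod_Ico_eq_prod_range]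
  rw [Nat.add_sub_cancel]
  rw [← Fin.prod_univ_eq_prod_range (fun j => μ {ω | Wk.T 1 ω = t (1 + j)}) n]
  apply Finset.prod_congr rfl
  intro i _
  have h1 : 1 + (i : ℕ) - 1 < n := by simpa using i.isLt
  have hi : (⟨1 + (i : ℕ) - 1, h1⟩ : Fin n) = i :=
    Fin.ext (show 1 + (i : ℕ) - 1 = (i : ℕ) by omega)
  simp only [ht, h1, dif_pos, hi]

/-- expected weight of a parity bit -/
def wE (Wk : ReinforcedWalk d Ω μ) (b : Bool) : ENNReal :=
  if b then μ {ω | Odd (Wk.T 1 ω)} else μ {ω | ¬ Odd (Wk.T 1 ω)}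

theorem tsum_parity_s17 (Wk : ReinforcedWalk d Ω μ) (b : Bool) :
    ∑' a : ℕ, μ {ω | Wk.T 1 ω = 2 * a + cond b 1 0} = wE Wk b := by
  have hmeas : ∀ a : ℕ, MeasurableSet {ω | Wk.T 1 ω = 2 * a + cond b 1 0} := by
    intro a
    exact Wk.measT 1 (measurableSet_singleton (2 * a + cond b 1 0))
  have hdisj : Pairwise (Function.onFun Disjoint
      fun a : ℕ => {ω | Wk.T 1 ω = 2 * a + cond b 1 0}) := by
    intro a a' haa'
    simp only [Function.onFun, Set.disjoint_left, Set.mem_setOf_eq]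
    intro ω h1 h2
    exact haa' (by omega)
  rw [← measure_iUnion hdisj hmeas (μ := μ)]
  have hset : (⋃ a : ℕ, {ω | Wk.T 1 ω = 2 * a + cond b 1 0}) =
      (if b then {ω | Odd (Wk.T 1 ω)} else {ω | ¬ Odd (Wk.T 1 ω)}) := by
    cases b
    · ext ω
      simp only [Set.mem_iUnion, Set.mem_setOf_eq, Nat.odd_iff, Bool.cond_false, cond_false,
        if_false, Bool.false_eq_true, Nat.add_zero]
      constructor
      · rintro ⟨a, ha⟩; omega
      · intro h; exact ⟨Wk.T 1 ω / 2, by omega⟩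
    · ext ω
      simp only [Set.mem_iUnion, Set.mem_setOf_eq, Nat.odd_iff, Bool.cond_true, cond_true,
        if_true]
      constructor
      · rintro ⟨a, ha⟩; omega
      · intro h; exact ⟨Wk.T 1 ω / 2, by omega⟩
  rw [hset]
  cases b <;> simp [wE]

theorem tsum_pi_prod : ∀ (n : ℕ) (g : Fin n → ℕ → ENNReal),
    ∑' s : Fin n → ℕ, ∏ i, g i (s i) = ∏ i, ∑' a, g i a := by
  intro n
  induction n with
  | zero =>
    intro g
    simp only [Finset.univ_eq_empty, Finset.prod_empty]
    exact tsum_eq_single (fun i => i.elim0) (fun s hs => absurd (funext fun i => i.elim0) hs)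
  | succ n ih =>
    intro g
    rw [← (Fin.consEquiv (fun _ : Fin (n + 1) => ℕ)).tsum_eq]
    rw [ENNReal.tsum_prod']
    simp only [Fin.consEquiv_apply]
    have : ∀ (a : ℕ) (s : Fin n → ℕ),
        ∏ i, g i (Fin.cons (α := fun _ : Fin (n + 1) => ℕ) a s i)
          = g 0 a * ∏ i : Fin n, g i.succ (s i) := by
      intro a s
      rw [Fin.prod_univ_succ]
      simp
    simp_rw [this]
    rw [Fin.prod_univ_succ]
    calc ∑' (a : ℕ), ∑' (s : Fin n → ℕ), g 0 a * ∏ i : Fin n, g i.succ (s i)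
        = ∑' (a : ℕ), g 0 a * ∑' (s : Fin n → ℕ), ∏ i : Fin n, g i.succ (s i) := by
          congr 1; funext a; rw [ENNReal.tsum_mul_left]
      _ = (∑' (a : ℕ), g 0 a) * ∑' (s : Fin n → ℕ), ∏ i : Fin n, g i.succ (s i) := by
          rw [ENNReal.tsum_mul_right]
      _ = (∑' (a : ℕ), g 0 a) * ∏ i : Fin n, ∑' a, g i.succ a := by rw [ih]

theorem Bs_eq_iUnion (Wk : ReinforcedWalk d Ω μ) (n : ℕ)
    (r : Fin n → EuclideanSpace ℝ (Fin d) × Bool) :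
    Bs Wk n r = ⋃ s : Fin n → ℕ, Acyl Wk n r s := by
  ext ω
  simp only [Bs, Set.mem_preimage, Set.mem_singleton_iff, funext_iff, pth, Prod.ext_iff,
    Set.mem_iUnion, Acyl, Set.mem_setOf_eq]
  constructor
  · intro h
    refine ⟨fun i => Wk.T ((i : ℕ) + 1) ω / 2, fun i => ⟨(h i).1, ?_⟩⟩
    have := (h i).2
    rcases Bool.eq_false_or_eq_true ((r i).2) with hb | hb <;>
      rw [hb] at this ⊢ <;> simp only [decide_eq_true_eq, decide_eq_false_iff_not,
        Nat.odd_iff, Bool.cond_true, Bool.cond_false] at this ⊢ <;> omega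
  · rintro ⟨s, hs⟩ i
    refine ⟨(hs i).1, ?_⟩
    have := (hs i).2
    rcases Bool.eq_false_or_eq_true ((r i).2) with hb | hb <;>
      rw [hb] at this ⊢ <;> simp only [decide_eq_true_eq, decide_eq_false_iff_not,
        Nat.odd_iff, Bool.cond_true, Bool.cond_false] at this ⊢ <;> omega

/-- the measure of a parity cylinder -/
theorem measure_Bs_compat (Wk : ReinforcedWalk d Ω μ) {n : ℕ} (hn : 1 ≤ n)
    {r : Fin n → EuclideanSpace ℝ (Fin d) × Bool}
    (hr : ∀ i, (r i).1 ∈ unitVecs d) (hc : compat n r) :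
    μ (Bs Wk n r) = ENNReal.ofReal ((2 * (d : ℝ))⁻¹ * ((2 * (d : ℝ) - 1)⁻¹) ^ (n - 1)) *
      ∏ i : Fin n, wE Wk ((r i).2) := by
  rw [Bs_eq_iUnion]
  have hdisj : Pairwise (Function.onFun Disjoint (fun s => Acyl Wk n r s)) := by
    intro s s' hss'
    have : ∃ i, s i ≠ s' i := by
      by_contra h
      push_neg at h
      exact hss' (funext h)
    obtain ⟨i, hi⟩ := this
    simp only [Function.onFun, Set.disjoint_left, Acyl, Set.mem_setOf_eq]
    intro ω h1 h2
    have e1 := (h1 i).2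
    have e2 := (h2 i).2
    exact hi (by omega)
  rw [measure_iUnion hdisj (measurable_Acyl Wk n r)]
  calc ∑' s : Fin n → ℕ, μ (Acyl Wk n r s)
      = ∑' s : Fin n → ℕ, ENNReal.ofReal ((2 * (d : ℝ))⁻¹ * ((2 * (d : ℝ) - 1)⁻¹) ^ (n - 1)) *
        ∏ i : Fin n, μ {ω | Wk.T 1 ω = 2 * s i + cond (r i).2 1 0} := by
        congr 1; funext s; exact measure_Acyl Wk hn hr hc s
    _ = ENNReal.ofReal ((2 * (d : ℝ))⁻¹ * ((2 * (d : ℝ) - 1)⁻¹) ^ (n - 1)) *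
        ∑' s : Fin n → ℕ, ∏ i : Fin n, μ {ω | Wk.T 1 ω = 2 * s i + cond (r i).2 1 0} := by
        rw [ENNReal.tsum_mul_left]
    _ = _ := by
        rw [tsum_pi_prod n (fun i a => μ {ω | Wk.T 1 ω = 2 * a + cond (r i).2 1 0})]
        congr 1
        exact Finset.prod_congr rfl fun i _ => tsum_parity_s17 Wk ((r i).2)

/-! ### Path-sum combinatorics -/

/-- indicator of a parity bit -/
def bb (b : Bool) : ℝ := if b then 1 else 0

/-- real weight of a parity bit -/
def wR (p : ℝ) (b : Bool) : ℝ := if b then p else 1 - p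

/-- normalizing constant -/
def cRc (d n : ℕ) : ℝ := (2 * (d : ℝ))⁻¹ * ((2 * (d : ℝ) - 1)⁻¹) ^ (n - 1)

/-- the finite set of length-`n` paths -/
def PF (d n : ℕ) : Finset (Fin n → EuclideanSpace ℝ (Fin d) × Bool) :=
  Fintype.piFinset fun _ => (UF d) ×ˢ (Finset.univ : Finset Bool)

/-- the weight of a path -/
def Wt (d : ℕ) (p : ℝ) (n : ℕ) (r : Fin n → EuclideanSpace ℝ (Fin d) × Bool) : ℝ :=
  if compat n r then cRc d n * ∏ i, wR p (r i).2 else 0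

theorem wR_sum (p : ℝ) : wR p true + wR p false = 1 := by simp [wR]

theorem mem_PF_fst {n : ℕ} {r : Fin n → EuclideanSpace ℝ (Fin d) × Bool}
    (hr : r ∈ PF d n) (i : Fin n) : (r i).1 ∈ UF d := by
  rw [PF, Fintype.mem_piFinset] at hr
  exact (Finset.mem_product.1 (hr i)).1

theorem sum_PF_zero (F : (Fin 0 → EuclideanSpace ℝ (Fin d) × Bool) → ℝ) :
    ∑ r ∈ PF d 0, F r = F (fun i => i.elim0) := by
  have h : PF d 0 = {fun i => i.elim0} := by
    ext f
    simp only [PF, Fintype.mem_piFinset, Finset.mem_singleton]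
    constructor
    · intro _; funext i; exact i.elim0
    · intro _ i; exact i.elim0
  rw [h, Finset.sum_singleton]

theorem peel {n : ℕ} (F : (Fin (n + 1) → EuclideanSpace ℝ (Fin d) × Bool) → ℝ) :
    ∑ r ∈ PF d (n + 1), F r =
      ∑ r ∈ PF d n, ∑ x ∈ (UF d) ×ˢ (Finset.univ : Finset Bool), F (Fin.snoc r x) := by
  have h := Finset.filter_piFinset_eq_map_snocEquiv
    (fun _ : Fin (n + 1) => (UF d) ×ˢ (Finset.univ : Finset Bool)) (fun _ => True)
  simp only [Finset.filter_true] at h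
  rw [PF, h, Finset.sum_map, Finset.sum_product, Finset.sum_comm]
  exact Finset.sum_congr rfl fun r _ => Finset.sum_congr rfl fun x _ => rfl

theorem snoc_mk_lt {n : ℕ} (r : Fin n → EuclideanSpace ℝ (Fin d) × Bool)
    (x : EuclideanSpace ℝ (Fin d) × Bool) {j : ℕ} (hj : j < n) (hj' : j < n + 1) :
    (Fin.snoc r x : Fin (n + 1) → EuclideanSpace ℝ (Fin d) × Bool) ⟨j, hj'⟩ = r ⟨j, hj⟩ := by
  have : (⟨j, hj'⟩ : Fin (n + 1)) = Fin.castSucc ⟨j, hj⟩ := rfl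
  rw [this, Fin.snoc_castSucc]

theorem snoc_mk_last {n : ℕ} (r : Fin n → EuclideanSpace ℝ (Fin d) × Bool)
    (x : EuclideanSpace ℝ (Fin d) × Bool) (h : n < n + 1) :
    (Fin.snoc r x : Fin (n + 1) → EuclideanSpace ℝ (Fin d) × Bool) ⟨n, h⟩ = x := by
  have : (⟨n, h⟩ : Fin (n + 1)) = Fin.last n := rfl
  rw [this, Fin.snoc_last]

theorem compat_snoc {n : ℕ} (hn : 1 ≤ n) (r : Fin n → EuclideanSpace ℝ (Fin d) × Bool)
    (x : EuclideanSpace ℝ (Fin d) × Bool) :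
    compat (n + 1) (Fin.snoc r x) ↔
      compat n r ∧ x.1 ≠ excl (r ⟨n - 1, by omega⟩).2 (r ⟨n - 1, by omega⟩).1 := by
  constructor
  · intro h
    constructor
    · intro k hk
      have := h k (by omega)
      rwa [snoc_mk_lt r x hk, snoc_mk_lt r x (Nat.lt_of_succ_lt hk)] at this
    · have := h (n - 1) (by omega)
      have e1 : (⟨n - 1 + 1, by omega⟩ : Fin (n + 1)) = ⟨n, by omega⟩ := by
        simp only [Fin.mk.injEq]; omega
      rw [e1, snoc_mk_last, snoc_mk_lt r x (by omega : n - 1 < n)] at this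
      exact this
  · rintro ⟨h1, h2⟩ k hk
    by_cases hkn : k + 1 < n
    · rw [snoc_mk_lt r x hkn, snoc_mk_lt r x (Nat.lt_of_succ_lt hkn)]
      exact h1 k hkn
    · have hk1 : k + 1 = n := by omega
      have e1 : (⟨k + 1, hk⟩ : Fin (n + 1)) = ⟨n, by omega⟩ := by
        simp only [Fin.mk.injEq]; omega
      have e2 : (⟨k, Nat.lt_of_succ_lt hk⟩ : Fin (n + 1)) = ⟨n - 1, by omega⟩ := by
        simp only [Fin.mk.injEq]; omega
      rw [e1, e2, snoc_mk_last, snoc_mk_lt r x (by omega : n - 1 < n)]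
      exact h2

theorem Wt_snoc {n : ℕ} (hn : 1 ≤ n) (p : ℝ) (r : Fin n → EuclideanSpace ℝ (Fin d) × Bool)
    (x : EuclideanSpace ℝ (Fin d) × Bool) :
    Wt d p (n + 1) (Fin.snoc r x) =
      if x.1 = excl (r ⟨n - 1, by omega⟩).2 (r ⟨n - 1, by omega⟩).1 then 0
      else (2 * (d : ℝ) - 1)⁻¹ * wR p x.2 * Wt d p n r := by
  have hprod : ∏ i : Fin (n + 1), wR p ((Fin.snoc r x : Fin (n+1) → _) i).2 =
      (∏ i : Fin n, wR p ((r i).2)) * wR p x.2 := by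
    rw [Fin.prod_univ_castSucc]
    simp [Fin.snoc_castSucc, Fin.snoc_last]
  have hc : cRc d (n + 1) = (2 * (d : ℝ) - 1)⁻¹ * cRc d n := by
    rw [cRc, cRc]
    have e1 : n + 1 - 1 = (n - 1) + 1 := by omega
    rw [e1, pow_succ]
    ring
  by_cases hstep : x.1 = excl (r ⟨n - 1, by omega⟩).2 (r ⟨n - 1, by omega⟩).1
  · rw [if_pos hstep, Wt, if_neg]
    rw [compat_snoc hn]
    tauto
  · rw [if_neg hstep, Wt, Wt]
    by_cases hcp : compat n r
    · rw [if_pos ((compat_snoc hn r x).2 ⟨hcp, hstep⟩), if_pos hcp, hprod, hc]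
      ring
    · rw [if_neg (fun h => hcp ((compat_snoc hn r x).1 h).1), if_neg hcp, mul_zero]

theorem sum_ite_erase {e : EuclideanSpace ℝ (Fin d)} (he : e ∈ UF d)
    (f : EuclideanSpace ℝ (Fin d) → ℝ) :
    ∑ y ∈ UF d, (if y = e then 0 else f y) = ∑ y ∈ (UF d).erase e, f y := by
  rw [← Finset.sum_erase_add (UF d) _ he, if_pos rfl, add_zero]
  exact Finset.sum_congr rfl fun y hy => if_neg (Finset.ne_of_mem_erase hy)

theorem inner_sum {u : EuclideanSpace ℝ (Fin d)} (hu : u ∈ UF d) (b : Bool)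
    (f : EuclideanSpace ℝ (Fin d) → ℝ) (ψ : Bool → ℝ) :
    ∑ x ∈ (UF d) ×ˢ (Finset.univ : Finset Bool),
      (if x.1 = excl b u then (0 : ℝ) else f x.1 * ψ x.2) =
      (∑ y ∈ (UF d).erase (excl b u), f y) * (ψ true + ψ false) := by
  rw [Finset.sum_product]
  have : ∀ y ∈ UF d, ∑ b' ∈ (Finset.univ : Finset Bool),
      (if y = excl b u then (0 : ℝ) else f y * ψ b') =
      (if y = excl b u then (0 : ℝ) else f y * (ψ true + ψ false)) := by
    intro y _
    by_cases h : y = excl b u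
    · simp [h]
    · simp only [if_neg h]
      rw [Fintype.sum_bool]
      ring
  rw [Finset.sum_congr rfl this, sum_ite_erase (excl_mem_UF hu), ← Finset.sum_mul]

theorem cast_2d1 (hd : 1 ≤ d) : ((2 * d - 1 : ℕ) : ℝ) = 2 * (d : ℝ) - 1 := by
  have : (1 : ℕ) ≤ 2 * d := by omega
  push_cast [Nat.cast_sub this]
  ring

theorem two_d_one_ne (hd : 1 ≤ d) : (2 * (d : ℝ) - 1) ≠ 0 := by
  have : (1 : ℝ) ≤ (d : ℝ) := by exact_mod_cast hd
  nlinarith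

theorem Wt_one (p : ℝ) (s : Fin 1 → EuclideanSpace ℝ (Fin d) × Bool) :
    Wt d p 1 s = (2 * (d : ℝ))⁻¹ * wR p ((s ⟨0, Nat.one_pos⟩).2) := by
  rw [Wt, if_pos (show compat 1 s from fun k hk => absurd hk (by omega)), cRc, pow_zero, mul_one,
    Fin.prod_univ_one]
  rfl

theorem sum_base (hd : 1 ≤ d) (ψ : Bool → ℝ) :
    ∑ x ∈ (UF d) ×ˢ (Finset.univ : Finset Bool), ψ x.2 =
      2 * (d : ℝ) * (ψ true + ψ false) := by
  rw [Finset.sum_product]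
  have : ∀ y ∈ UF d, ∑ b ∈ (Finset.univ : Finset Bool), ψ b = ψ true + ψ false := by
    intro y _
    rw [Fintype.sum_bool]
  rw [Finset.sum_congr rfl this, Finset.sum_const, card_UF, nsmul_eq_mul]
  push_cast
  ring

theorem Tot (hd : 1 ≤ d) (p : ℝ) : ∀ n, 1 ≤ n → ∑ r ∈ PF d n, Wt d p n r = 1 := by
  have hne : (2 * (d : ℝ)) ≠ 0 := by
    have : (1 : ℝ) ≤ (d : ℝ) := by exact_mod_cast hd
    nlinarith
  have h21 := two_d_one_ne hd
  intro n
  induction n with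
  | zero => omega
  | succ n ih =>
    intro _
    rcases Nat.eq_zero_or_pos n with hn | hn
    · subst hn
      rw [peel, sum_PF_zero]
      have : ∀ x ∈ (UF d) ×ˢ (Finset.univ : Finset Bool),
          Wt d p 1 (Fin.snoc (fun i => i.elim0) x) = (2 * (d : ℝ))⁻¹ * wR p x.2 := by
        intro x _
        rw [Wt_one, snoc_mk_last]
      rw [Finset.sum_congr rfl this,
        sum_base hd (fun b => (2 * (d : ℝ))⁻¹ * wR p b)]
      have := wR_sum p
      field_simp
      linarith [wR_sum p]
    · rw [peel]
      have hstep : ∀ r ∈ PF d n, ∑ x ∈ (UF d) ×ˢ (Finset.univ : Finset Bool),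
          Wt d p (n + 1) (Fin.snoc r x) = Wt d p n r := by
        intro r hr
        have hu := mem_PF_fst hr ⟨n - 1, by omega⟩
        have : ∀ x ∈ (UF d) ×ˢ (Finset.univ : Finset Bool),
            Wt d p (n + 1) (Fin.snoc r x) =
            (if x.1 = excl ((r ⟨n - 1, by omega⟩).2) ((r ⟨n - 1, by omega⟩).1) then (0:ℝ)
              else (fun _ => (1:ℝ)) x.1 *
                (fun b => (2 * (d : ℝ) - 1)⁻¹ * wR p b * Wt d p n r) x.2) := by
          intro x _
          rw [Wt_snoc hn p r x]
          by_cases h : x.1 = excl ((r ⟨n - 1, by omega⟩).2) ((r ⟨n - 1, by omega⟩).1)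
          · rw [if_pos h, if_pos h]
          · rw [if_neg h, if_neg h, one_mul]
        have key := inner_sum hu ((r ⟨n - 1, by omega⟩).2) (fun _ => (1 : ℝ))
          (fun b => (2 * (d : ℝ) - 1)⁻¹ * wR p b * Wt d p n r)
        rw [Finset.sum_congr rfl this, key, Finset.sum_const,
          Finset.card_erase_of_mem (excl_mem_UF hu), card_UF, nsmul_eq_mul, mul_one,
          cast_2d1 hd]
        have hw := wR_sum p
        field_simp
        linear_combination Wt d p n r * hw
      rw [Finset.sum_congr rfl hstep, ih hn]

theorem Blast (hd : 1 ≤ d) (p : ℝ) : ∀ n, 1 ≤ n → ∀ (h : n - 1 < n),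
    ∑ r ∈ PF d n, bb ((r ⟨n - 1, h⟩).2) * Wt d p n r = p := by
  have h21 := two_d_one_ne hd
  have hne : (2 * (d : ℝ)) ≠ 0 := by
    have : (1 : ℝ) ≤ (d : ℝ) := by exact_mod_cast hd
    nlinarith
  intro n
  induction n with
  | zero => omega
  | succ n ih =>
    intro _ hlt
    rcases Nat.eq_zero_or_pos n with hn | hn
    · subst hn
      rw [peel, sum_PF_zero]
      have : ∀ x ∈ (UF d) ×ˢ (Finset.univ : Finset Bool),
          bb (((Fin.snoc (fun i => i.elim0) x : Fin 1 → _) ⟨0, hlt⟩).2) *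
            Wt d p 1 (Fin.snoc (fun i => i.elim0) x) =
          bb x.2 * ((2 * (d : ℝ))⁻¹ * wR p x.2) := by
        intro x _
        rw [Wt_one, snoc_mk_last]
      rw [Finset.sum_congr rfl this,
        sum_base hd (fun b => bb b * ((2 * (d : ℝ))⁻¹ * wR p b))]
      simp only [bb, wR, if_pos, if_neg, Bool.true_eq_false, one_mul, zero_mul, if_true,
        if_false, Bool.false_eq_true, add_zero]
      try field_simp
    · rw [peel]
      have hstep : ∀ r ∈ PF d n, ∑ x ∈ (UF d) ×ˢ (Finset.univ : Finset Bool),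
          bb (((Fin.snoc r x : Fin (n + 1) → _) ⟨n + 1 - 1, hlt⟩).2) *
            Wt d p (n + 1) (Fin.snoc r x) = p * Wt d p n r := by
        intro r hr
        have hu := mem_PF_fst hr ⟨n - 1, by omega⟩
        have : ∀ x ∈ (UF d) ×ˢ (Finset.univ : Finset Bool),
            bb (((Fin.snoc r x : Fin (n + 1) → _) ⟨n + 1 - 1, hlt⟩).2) *
              Wt d p (n + 1) (Fin.snoc r x) =
            (if x.1 = excl ((r ⟨n - 1, by omega⟩).2) ((r ⟨n - 1, by omega⟩).1) then (0:ℝ)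
              else (fun _ => (1:ℝ)) x.1 *
                (fun b => bb b * ((2 * (d : ℝ) - 1)⁻¹ * wR p b) * Wt d p n r) x.2) := by
          intro x _
          have hsl : (Fin.snoc r x : Fin (n + 1) → _) ⟨n + 1 - 1, hlt⟩ = x :=
            snoc_mk_last r x hlt
          rw [hsl, Wt_snoc hn p r x]
          by_cases h : x.1 = excl ((r ⟨n - 1, by omega⟩).2) ((r ⟨n - 1, by omega⟩).1)
          · rw [if_pos h, if_pos h, mul_zero]
          · rw [if_neg h, if_neg h, one_mul]
            ring
        have key := inner_sum hu ((r ⟨n - 1, by omega⟩).2) (fun _ => (1 : ℝ))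
          (fun b => bb b * ((2 * (d : ℝ) - 1)⁻¹ * wR p b) * Wt d p n r)
        rw [Finset.sum_congr rfl this, key, Finset.sum_const,
          Finset.card_erase_of_mem (excl_mem_UF hu), card_UF, nsmul_eq_mul, mul_one,
          cast_2d1 hd]
        simp only [bb, wR, if_true, if_false, Bool.true_eq_false, Bool.false_eq_true,
          one_mul, zero_mul, add_zero, mul_zero]
        field_simp
        try ring
      rw [Finset.sum_congr rfl hstep, ← Finset.mul_sum, Tot hd p n hn, mul_one]

theorem pth_mem_PF (Wk : ReinforcedWalk d Ω μ) (n : ℕ) (ω : Ω) : pth Wk n ω ∈ PF d n := by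
  rw [PF, Fintype.mem_piFinset]
  intro i
  rw [Finset.mem_product]
  exact ⟨mem_UF_iff.2 (Wk.D_mem _ ω), Finset.mem_univ _⟩

theorem sum_measure_Bs (Wk : ReinforcedWalk d Ω μ) [IsProbabilityMeasure μ] (n : ℕ) :
    ∑ r ∈ PF d n, μ (Bs Wk n r) = 1 := by
  have hdisj : (↑(PF d n) : Set (Fin n → EuclideanSpace ℝ (Fin d) × Bool)).PairwiseDisjoint
      (fun r => Bs Wk n r) := by
    intro r _ r' _ hne
    simp only [Function.onFun, Set.disjoint_left, Bs, Set.mem_preimage, Set.mem_singleton_iff]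
    intro ω h1 h2
    exact hne (h1 ▸ h2 ▸ rfl)
  rw [← measure_biUnion_finset hdisj (fun r _ => measurable_Bs Wk n r)]
  have hcover : (⋃ r ∈ PF d n, Bs Wk n r) = Set.univ := by
    ext ω
    simp only [Set.mem_iUnion, Set.mem_univ, iff_true]
    exact ⟨pth Wk n ω, pth_mem_PF Wk n ω, rfl⟩
  rw [hcover, measure_univ]

theorem measure_Bs_eq (hd : 1 ≤ d) (Wk : ReinforcedWalk d Ω μ) [IsProbabilityMeasure μ]
    {n : ℕ} (hn : 1 ≤ n) :
    ∀ r ∈ PF d n, (μ (Bs Wk n r)).toReal = Wt d Wk.p n r := by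
  have hwE : ∀ b, (wE Wk b).toReal = wR Wk.p b := by
    intro b
    cases b
    · rw [wE, if_neg (by simp), wR, if_neg (by simp)]
      have hc : {ω | ¬ Odd (Wk.T 1 ω)} = {ω | Odd (Wk.T 1 ω)}ᶜ := rfl
      have hm : MeasurableSet {ω | Odd (Wk.T 1 ω)} :=
        Wk.measT 1 (show MeasurableSet {t : ℕ | Odd t} by trivial)
      rw [hc, measure_compl hm (measure_ne_top μ _),
        measure_univ, ENNReal.toReal_sub_of_le prob_le_one ENNReal.one_ne_top,
        ENNReal.toReal_one, ReinforcedWalk.p]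
    · rw [wE, if_pos rfl, wR, if_pos rfl, ReinforcedWalk.p]
  have hcomp : ∀ r ∈ PF d n, compat n r → (μ (Bs Wk n r)).toReal = Wt d Wk.p n r := by
    intro r hr hc
    rw [measure_Bs_compat Wk hn (fun i => mem_UF_iff.1 (mem_PF_fst hr i)) hc,
      ENNReal.toReal_mul, ENNReal.toReal_ofReal (by
        have h1 : (1 : ℝ) ≤ (d : ℝ) := by exact_mod_cast hd
        have h2 : (0 : ℝ) ≤ 2 * (d : ℝ) - 1 := by linarith
        positivity), ENNReal.toReal_prod]
    simp only [hwE]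
    rw [Wt, if_pos hc, cRc]
  have htot : ∑ r ∈ PF d n, (μ (Bs Wk n r)).toReal = 1 := by
    rw [← ENNReal.toReal_sum (fun r _ => measure_ne_top μ _), sum_measure_Bs Wk n,
      ENNReal.toReal_one]
  have hWtot : ∑ r ∈ PF d n, Wt d Wk.p n r = 1 := Tot hd Wk.p n hn
  have hsplit1 := Finset.sum_filter_add_sum_filter_not (PF d n) (fun r => compat n r)
    (fun r => (μ (Bs Wk n r)).toReal)
  have hsplit2 := Finset.sum_filter_add_sum_filter_not (PF d n) (fun r => compat n r)
    (fun r => Wt d Wk.p n r)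
  have hWzero : ∑ r ∈ (PF d n).filter (fun r => ¬ compat n r), Wt d Wk.p n r = 0 := by
    apply Finset.sum_eq_zero
    intro r hr
    rw [Wt, if_neg (Finset.mem_filter.1 hr).2]
  have heqf : ∑ r ∈ (PF d n).filter (fun r => compat n r), (μ (Bs Wk n r)).toReal =
      ∑ r ∈ (PF d n).filter (fun r => compat n r), Wt d Wk.p n r := by
    apply Finset.sum_congr rfl
    intro r hr
    exact hcomp r (Finset.mem_filter.1 hr).1 (Finset.mem_filter.1 hr).2
  have hzero : ∑ r ∈ (PF d n).filter (fun r => ¬ compat n r), (μ (Bs Wk n r)).toReal = 0 := by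
    have : ∑ r ∈ (PF d n).filter (fun r => compat n r), (μ (Bs Wk n r)).toReal = 1 := by
      rw [heqf]
      have := hsplit2.trans hWtot
      rw [hWzero, add_zero] at this
      exact this
    have h2 := hsplit1.trans htot
    rw [this] at h2
    linarith
  intro r hr
  by_cases hc : compat n r
  · exact hcomp r hr hc
  · rw [Wt, if_neg hc]
    have hmem : r ∈ (PF d n).filter (fun r => ¬ compat n r) := Finset.mem_filter.2 ⟨hr, hc⟩
    have hnn : ∀ r' ∈ (PF d n).filter (fun r => ¬ compat n r),
        0 ≤ (μ (Bs Wk n r')).toReal := fun r' _ => ENNReal.toReal_nonneg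
    exact (Finset.sum_eq_zero_iff_of_nonneg hnn).1 hzero r hmem

theorem integral_eq_sum (Wk : ReinforcedWalk d Ω μ) [IsProbabilityMeasure μ] (n : ℕ)
    (g : (Fin n → EuclideanSpace ℝ (Fin d) × Bool) → ℝ) :
    ∫ ω, g (pth Wk n ω) ∂μ = ∑ r ∈ PF d n, g r * (μ (Bs Wk n r)).toReal := by
  have hfun : (fun ω => g (pth Wk n ω)) =
      fun ω => ∑ r ∈ PF d n, Set.indicator (Bs Wk n r) (fun _ => g r) ω := by
    funext ω
    rw [Finset.sum_eq_single_of_mem (pth Wk n ω) (pth_mem_PF Wk n ω)]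
    · rw [Set.indicator_of_mem (show ω ∈ Bs Wk n (pth Wk n ω) from rfl)]
    · intro r _ hne
      apply Set.indicator_of_notMem
      simp only [Bs, Set.mem_preimage, Set.mem_singleton_iff]
      exact fun h => hne (h ▸ rfl)
  rw [hfun, integral_finset_sum _ (fun r _ =>
    (integrable_const (g r)).indicator (measurable_Bs Wk n r))]
  exact Finset.sum_congr rfl fun r _ => by
    rw [integral_indicator_const _ (measurable_Bs Wk n r), smul_eq_mul, mul_comm, measureReal_def]

theorem sum_inner_erase_excl {u : EuclideanSpace ℝ (Fin d)} (hu : u ∈ UF d)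
    (w : EuclideanSpace ℝ (Fin d)) (b : Bool) :
    ∑ y ∈ (UF d).erase (excl b u), (inner ℝ w y : ℝ) = (2 * bb b - 1) * (inner ℝ w u : ℝ) := by
  rw [sum_inner_erase (excl_mem_UF hu) w]
  cases b
  · simp [excl, bb]
    try ring
  · simp [excl, bb, inner_neg_right]
    try ring

theorem peel_inner (hd : 1 ≤ d) (p : ℝ) {n im : ℕ} (hn : 1 ≤ n) (him : im < n) (χ : Bool → ℝ) :
    ∑ r ∈ PF d (n + 1), (inner ℝ ((r ⟨im, by omega⟩).1) ((r ⟨n, by omega⟩).1) : ℝ) *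
        bb ((r ⟨im, by omega⟩).2) * χ ((r ⟨n, by omega⟩).2) * Wt d p (n + 1) r =
      (2 * (d : ℝ) - 1)⁻¹ * (χ true * p + χ false * (1 - p)) *
        ∑ r ∈ PF d n, (2 * bb ((r ⟨n - 1, by omega⟩).2) - 1) *
          (inner ℝ ((r ⟨im, by omega⟩).1) ((r ⟨n - 1, by omega⟩).1) : ℝ) *
          bb ((r ⟨im, by omega⟩).2) * Wt d p n r := by
  rw [peel, Finset.mul_sum]
  apply Finset.sum_congr rfl
  intro r hr
  have hu := mem_PF_fst hr ⟨n - 1, by omega⟩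
  have hpt : ∀ x ∈ (UF d) ×ˢ (Finset.univ : Finset Bool),
      (inner ℝ (((Fin.snoc r x : Fin (n+1) → _) ⟨im, by omega⟩).1)
          (((Fin.snoc r x : Fin (n+1) → _) ⟨n, by omega⟩).1) : ℝ) *
        bb (((Fin.snoc r x : Fin (n+1) → _) ⟨im, by omega⟩).2) *
        χ (((Fin.snoc r x : Fin (n+1) → _) ⟨n, by omega⟩).2) *
        Wt d p (n + 1) (Fin.snoc r x) =
      (if x.1 = excl ((r ⟨n - 1, by omega⟩).2) ((r ⟨n - 1, by omega⟩).1) then (0:ℝ)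
        else (fun y => (inner ℝ ((r ⟨im, him⟩).1) y : ℝ)) x.1 *
          (fun b => χ b * ((2 * (d : ℝ) - 1)⁻¹ * wR p b * Wt d p n r) *
            bb ((r ⟨im, him⟩).2)) x.2) := by
    intro x _
    rw [snoc_mk_lt r x him, snoc_mk_last r x, Wt_snoc hn p r x]
    by_cases h : x.1 = excl ((r ⟨n - 1, by omega⟩).2) ((r ⟨n - 1, by omega⟩).1)
    · rw [if_pos h, if_pos h, mul_zero]
    · rw [if_neg h, if_neg h]
      ring
  have key := inner_sum hu ((r ⟨n - 1, by omega⟩).2)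
    (fun y => (inner ℝ ((r ⟨im, him⟩).1) y : ℝ))
    (fun b => χ b * ((2 * (d : ℝ) - 1)⁻¹ * wR p b * Wt d p n r) * bb ((r ⟨im, him⟩).2))
  rw [Finset.sum_congr rfl hpt, key,
    sum_inner_erase_excl hu ((r ⟨im, him⟩).1) ((r ⟨n - 1, by omega⟩).2)]
  simp only [wR, if_pos, if_neg, Bool.true_eq_false, Bool.false_eq_true, if_true, if_false]
  ring

theorem base_conv (hd : 1 ≤ d) (p : ℝ) {n : ℕ} (hn : 1 ≤ n) :
    ∑ r ∈ PF d n, (2 * bb ((r ⟨n - 1, by omega⟩).2) - 1) *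
        (inner ℝ ((r ⟨n - 1, by omega⟩).1) ((r ⟨n - 1, by omega⟩).1) : ℝ) *
        bb ((r ⟨n - 1, by omega⟩).2) * Wt d p n r = p := by
  have hcongr : ∀ r ∈ PF d n, (2 * bb ((r ⟨n - 1, by omega⟩).2) - 1) *
      (inner ℝ ((r ⟨n - 1, by omega⟩).1) ((r ⟨n - 1, by omega⟩).1) : ℝ) *
      bb ((r ⟨n - 1, by omega⟩).2) * Wt d p n r =
      bb ((r ⟨n - 1, by omega⟩).2) * Wt d p n r := by
    intro r hr
    rw [inner_self_UF (mem_PF_fst hr ⟨n - 1, by omega⟩)]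
    rcases Bool.eq_false_or_eq_true ((r ⟨n - 1, by omega⟩).2) with hb | hb <;>
      rw [hb] <;> simp [bb] <;> try ring
  rw [Finset.sum_congr rfl hcongr]
  exact Blast hd p n hn (by omega)

set_option maxHeartbeats 2000000 in
theorem main_alg (hd : 1 ≤ d) (p : ℝ) (m : ℕ) (hm : 1 ≤ m) : ∀ j, 1 ≤ j →
    (∑ r ∈ PF d (m + j), (inner ℝ ((r ⟨m - 1, by omega⟩).1) ((r ⟨m + j - 1, by omega⟩).1) : ℝ) *
        bb ((r ⟨m - 1, by omega⟩).2) * Wt d p (m + j) r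
      = p / (2 * (d : ℝ) - 1) * ((2 * p - 1) / (2 * (d : ℝ) - 1)) ^ (j - 1)) ∧
    (∑ r ∈ PF d (m + j), (inner ℝ ((r ⟨m - 1, by omega⟩).1) ((r ⟨m + j - 1, by omega⟩).1) : ℝ) *
        bb ((r ⟨m - 1, by omega⟩).2) * bb ((r ⟨m + j - 1, by omega⟩).2) * Wt d p (m + j) r
      = p * (p / (2 * (d : ℝ) - 1) * ((2 * p - 1) / (2 * (d : ℝ) - 1)) ^ (j - 1))) := by
  have h21 := two_d_one_ne hd
  intro j
  induction j with
  | zero => omega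
  | succ j ihj =>
    intro _
    have emk : (⟨m + (j + 1) - 1, by omega⟩ : Fin (m + j + 1)) = ⟨m + j, by omega⟩ := by
      simp only [Fin.mk.injEq]; omega
    rcases Nat.eq_zero_or_pos j with h0 | hj1
    · -- base case : j + 1 = 1
      subst h0
      have hC := peel_inner hd p (n := m) (im := m - 1) hm (by omega) (fun _ => 1)
      have hA := peel_inner hd p (n := m) (im := m - 1) hm (by omega) bb
      constructor
      · show ∑ r ∈ PF d (m + 1),
            (inner ℝ ((r ⟨m - 1, by omega⟩).1) ((r ⟨m + (0 + 1) - 1, by omega⟩).1) : ℝ) *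
              bb ((r ⟨m - 1, by omega⟩).2) * Wt d p (m + 1) r = _
        have hCc : ∀ r ∈ PF d (m + 1),
            (inner ℝ ((r ⟨m - 1, by omega⟩).1) ((r ⟨m + (0 + 1) - 1, by omega⟩).1) : ℝ) *
              bb ((r ⟨m - 1, by omega⟩).2) * Wt d p (m + 1) r =
            (inner ℝ ((r ⟨m - 1, by omega⟩).1) ((r ⟨m, by omega⟩).1) : ℝ) *
              bb ((r ⟨m - 1, by omega⟩).2) * ((fun _ => (1:ℝ)) ((r ⟨m, by omega⟩).2)) *
              Wt d p (m + 1) r := by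
          intro r _
          have e : (⟨m + (0 + 1) - 1, by omega⟩ : Fin (m + 1)) = ⟨m, by omega⟩ := by
            simp only [Fin.mk.injEq]; omega
          rw [e]
          ring
        rw [Finset.sum_congr rfl hCc, hC, base_conv hd p hm]
        simp only [Nat.add_sub_cancel, pow_zero, mul_one]
        field_simp
        ring
      · show ∑ r ∈ PF d (m + 1),
            (inner ℝ ((r ⟨m - 1, by omega⟩).1) ((r ⟨m + (0 + 1) - 1, by omega⟩).1) : ℝ) *
              bb ((r ⟨m - 1, by omega⟩).2) * bb ((r ⟨m + (0 + 1) - 1, by omega⟩).2) *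
              Wt d p (m + 1) r = _
        have hAc : ∀ r ∈ PF d (m + 1),
            (inner ℝ ((r ⟨m - 1, by omega⟩).1) ((r ⟨m + (0 + 1) - 1, by omega⟩).1) : ℝ) *
              bb ((r ⟨m - 1, by omega⟩).2) * bb ((r ⟨m + (0 + 1) - 1, by omega⟩).2) *
              Wt d p (m + 1) r =
            (inner ℝ ((r ⟨m - 1, by omega⟩).1) ((r ⟨m, by omega⟩).1) : ℝ) *
              bb ((r ⟨m - 1, by omega⟩).2) * bb ((r ⟨m, by omega⟩).2) *
              Wt d p (m + 1) r := by
          intro r _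
          have e : (⟨m + (0 + 1) - 1, by omega⟩ : Fin (m + 1)) = ⟨m, by omega⟩ := by
            simp only [Fin.mk.injEq]; omega
          rw [e]
        rw [Finset.sum_congr rfl hAc, hA, base_conv hd p hm]
        simp only [Nat.add_sub_cancel, pow_zero, mul_one, bb, if_true, if_false,
          Bool.true_eq_false, Bool.false_eq_true]
        field_simp
        try ring
    · -- inductive step
      obtain ⟨ihC, ihA⟩ := ihj hj1
      have hq : ((2 * p - 1) / (2 * (d:ℝ) - 1)) ^ j =
          ((2 * p - 1) / (2 * (d:ℝ) - 1)) ^ (j - 1) * ((2 * p - 1) / (2 * (d:ℝ) - 1)) := by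
        conv_lhs => rw [show j = (j - 1) + 1 by omega]
        rw [pow_succ]
      have hsplit : ∑ r ∈ PF d (m + j), (2 * bb ((r ⟨m + j - 1, by omega⟩).2) - 1) *
          (inner ℝ ((r ⟨m - 1, by omega⟩).1) ((r ⟨m + j - 1, by omega⟩).1) : ℝ) *
          bb ((r ⟨m - 1, by omega⟩).2) * Wt d p (m + j) r =
          2 * (p * (p / (2 * (d : ℝ) - 1) * ((2 * p - 1) / (2 * (d : ℝ) - 1)) ^ (j - 1))) -
            p / (2 * (d : ℝ) - 1) * ((2 * p - 1) / (2 * (d : ℝ) - 1)) ^ (j - 1) := by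
        have hc : ∀ r ∈ PF d (m + j), (2 * bb ((r ⟨m + j - 1, by omega⟩).2) - 1) *
            (inner ℝ ((r ⟨m - 1, by omega⟩).1) ((r ⟨m + j - 1, by omega⟩).1) : ℝ) *
            bb ((r ⟨m - 1, by omega⟩).2) * Wt d p (m + j) r =
            2 * ((inner ℝ ((r ⟨m - 1, by omega⟩).1) ((r ⟨m + j - 1, by omega⟩).1) : ℝ) *
              bb ((r ⟨m - 1, by omega⟩).2) * bb ((r ⟨m + j - 1, by omega⟩).2) *
              Wt d p (m + j) r) -
            (inner ℝ ((r ⟨m - 1, by omega⟩).1) ((r ⟨m + j - 1, by omega⟩).1) : ℝ) *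
              bb ((r ⟨m - 1, by omega⟩).2) * Wt d p (m + j) r := by
          intro r _
          ring
        rw [Finset.sum_congr rfl hc, Finset.sum_sub_distrib, ← Finset.mul_sum, ihC, ihA]
      have hC := peel_inner hd p (n := m + j) (im := m - 1) (by omega) (by omega)
        (fun _ => 1)
      have hA := peel_inner hd p (n := m + j) (im := m - 1) (by omega) (by omega) bb
      constructor
      · show ∑ r ∈ PF d (m + j + 1),
            (inner ℝ ((r ⟨m - 1, by omega⟩).1) ((r ⟨m + (j + 1) - 1, by omega⟩).1) : ℝ) *
              bb ((r ⟨m - 1, by omega⟩).2) * Wt d p (m + j + 1) r = _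
        have hCc : ∀ r ∈ PF d (m + j + 1),
            (inner ℝ ((r ⟨m - 1, by omega⟩).1) ((r ⟨m + (j + 1) - 1, by omega⟩).1) : ℝ) *
              bb ((r ⟨m - 1, by omega⟩).2) * Wt d p (m + j + 1) r =
            (inner ℝ ((r ⟨m - 1, by omega⟩).1) ((r ⟨m + j, by omega⟩).1) : ℝ) *
              bb ((r ⟨m - 1, by omega⟩).2) * ((fun _ => (1:ℝ)) ((r ⟨m + j, by omega⟩).2)) *
              Wt d p (m + j + 1) r := by
          intro r _
          rw [emk]
          ring
        rw [Finset.sum_congr rfl hCc, hC, hsplit]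
        simp only [Nat.add_sub_cancel]
        rw [hq]
        field_simp
        ring
      · show ∑ r ∈ PF d (m + j + 1),
            (inner ℝ ((r ⟨m - 1, by omega⟩).1) ((r ⟨m + (j + 1) - 1, by omega⟩).1) : ℝ) *
              bb ((r ⟨m - 1, by omega⟩).2) * bb ((r ⟨m + (j + 1) - 1, by omega⟩).2) *
              Wt d p (m + j + 1) r = _
        have hAc : ∀ r ∈ PF d (m + j + 1),
            (inner ℝ ((r ⟨m - 1, by omega⟩).1) ((r ⟨m + (j + 1) - 1, by omega⟩).1) : ℝ) *
              bb ((r ⟨m - 1, by omega⟩).2) * bb ((r ⟨m + (j + 1) - 1, by omega⟩).2) *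
              Wt d p (m + j + 1) r =
            (inner ℝ ((r ⟨m - 1, by omega⟩).1) ((r ⟨m + j, by omega⟩).1) : ℝ) *
              bb ((r ⟨m - 1, by omega⟩).2) * bb ((r ⟨m + j, by omega⟩).2) *
              Wt d p (m + j + 1) r := by
          intro r _
          rw [emk]
        rw [Finset.sum_congr rfl hAc, hA, hsplit]
        simp only [Nat.add_sub_cancel]
        rw [hq]
        simp only [bb, if_true, if_false, Bool.true_eq_false, Bool.false_eq_true]
        field_simp
        ring

end Walk
end RWAux

/-- With `p = P(T odd)` (and `p < 1` if `d = 1`), for all `m ≥ 1` and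
`k ≥ 1`, `E((D_m ⬝ D_{m+k}) L_m L_{m+k}) = (p²/(2d-1)) ((2p-1)/(2d-1))^{k-1}`. -/
theorem reinforced_direction_correlation
    {d : ℕ} (hd : 1 ≤ d) {Ω : Type} [MeasurableSpace Ω] {μ : Measure Ω}
    [IsProbabilityMeasure μ] (Wk : ReinforcedWalk d Ω μ)
    (hp : d = 1 → Wk.p < 1) :
    ∀ m k : ℕ, 1 ≤ m → 1 ≤ k →
      ∫ ω, (inner ℝ (Wk.D m ω) (Wk.D (m + k) ω) : ℝ) * (Wk.L m ω : ℝ) * (Wk.L (m + k) ω : ℝ) ∂μ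
        = (Wk.p ^ 2 / (2 * (d : ℝ) - 1)) * ((2 * Wk.p - 1) / (2 * (d : ℝ) - 1)) ^ (k - 1) := by
  intro m k hm hk
  have h21 := RWAux.two_d_one_ne hd
  have hmk : 1 ≤ m + k := by omega
  have hgoal := (RWAux.main_alg hd Wk.p m hm k hk).2
  have hint : (fun ω => (inner ℝ (Wk.D m ω) (Wk.D (m + k) ω) : ℝ) * (Wk.L m ω : ℝ) *
      (Wk.L (m + k) ω : ℝ)) =
      fun ω => (fun r : Fin (m + k) → EuclideanSpace ℝ (Fin d) × Bool =>
        (inner ℝ ((r ⟨m - 1, by omega⟩).1) ((r ⟨m + k - 1, by omega⟩).1) : ℝ) *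
          RWAux.bb ((r ⟨m - 1, by omega⟩).2) * RWAux.bb ((r ⟨m + k - 1, by omega⟩).2))
        (RWAux.pth Wk (m + k) ω) := by
    funext ω
    simp only [RWAux.pth]
    have e1 : m - 1 + 1 = m := by omega
    have e2 : m + k - 1 + 1 = m + k := by omega
    rw [e1, e2]
    have hL : ∀ i, (Wk.L i ω : ℝ) = RWAux.bb (decide (Odd (Wk.T i ω))) := by
      intro i
      by_cases h : Odd (Wk.T i ω) <;> simp [ReinforcedWalk.L, RWAux.bb, h]
    rw [hL, hL]
  have hIE := RWAux.integral_eq_sum Wk (m + k)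
    (fun r : Fin (m + k) → EuclideanSpace ℝ (Fin d) × Bool =>
      (inner ℝ ((r ⟨m - 1, by omega⟩).1) ((r ⟨m + k - 1, by omega⟩).1) : ℝ) *
        RWAux.bb ((r ⟨m - 1, by omega⟩).2) * RWAux.bb ((r ⟨m + k - 1, by omega⟩).2))
  have hWt := RWAux.measure_Bs_eq hd Wk hmk
  have hsum : ∑ r ∈ RWAux.PF d (m + k),
      (inner ℝ ((r ⟨m - 1, by omega⟩).1) ((r ⟨m + k - 1, by omega⟩).1) : ℝ) *
        RWAux.bb ((r ⟨m - 1, by omega⟩).2) * RWAux.bb ((r ⟨m + k - 1, by omega⟩).2) *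
        (μ (RWAux.Bs Wk (m + k) r)).toReal =
      ∑ r ∈ RWAux.PF d (m + k),
      (inner ℝ ((r ⟨m - 1, by omega⟩).1) ((r ⟨m + k - 1, by omega⟩).1) : ℝ) *
        RWAux.bb ((r ⟨m - 1, by omega⟩).2) * RWAux.bb ((r ⟨m + k - 1, by omega⟩).2) *
        RWAux.Wt d Wk.p (m + k) r := by
    apply Finset.sum_congr rfl
    intro r hr
    rw [hWt r hr]
  rw [hint, hIE, hsum, hgoal]
  field_simp
end
end
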